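/- arXiv:1810.02304 — 3 statements merged into one kernel-verified Lean document; each statement's English description precedes it below -/
import Mathlib

section
/- Every chordal graph G admits a clique-tree T_G rooted at an arbitrary maximal clique such that for every non-root maximal clique K_i with parent K_{p(i)} and separator S_i = K_i ∩ K_{p(i)}, and for every child K_j of K_{p(i)}, no minimal separator of the subgraph G_j (induced by the union of maximal cliques in the subtree rooted at K_j) is contained in S_i. -/
def IsMaxClique {α : Type*} (G : SimpleGraph α) (K : Set α) : Prop :=
  G.IsClique K ∧ ∀ K', G.IsClique K' → K ⊆ K' → K' = K

/-- `G` is chordal: every cycle of length at least 4 has a chord. -/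
def Chordal {α : Type*} (G : SimpleGraph α) : Prop :=
  ∀ (v : α) (p : G.Walk v v), p.IsCycle → 4 ≤ p.length →
    ∃ x ∈ p.support, ∃ y ∈ p.support, G.Adj x y ∧ s(x, y) ∉ p.edges

/-- `S` separates `u` and `v` inside the induced subgraph of `G` on `W`:
every walk from `u` to `v` staying in `W` meets `S`. -/
def IsUVSepWithin {α : Type*} (G : SimpleGraph α) (W S : Set α) (u v : α) : Prop :=
  u ∈ W ∧ v ∈ W ∧ u ∉ S ∧ v ∉ S ∧ ¬ G.Adj u v ∧
    ∀ p : G.Walk u v, (∀ w ∈ p.support, w ∈ W) → ∃ w ∈ p.support, w ∈ S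

/-- `S` is a minimal separator of the subgraph of `G` induced by `W`. -/
def IsMinSepWithin {α : Type*} (G : SimpleGraph α) (W S : Set α) : Prop :=
  S ⊆ W ∧ ∃ u v : α, u ≠ v ∧ IsUVSepWithin G W S u v ∧
    ∀ S' ⊂ S, ¬ IsUVSepWithin G W S' u v

abbrev MaxCliques {α : Type*} (G : SimpleGraph α) := {K : Set α // IsMaxClique G K}


open Classical

namespace Stmt16Aux

/-- ancestor relation induced by a parent function -/
def Anc {β : Type*} (par : β → β) (a b : β) : Prop := ∃ n : ℕ, par^[n] b = a

section TreeCore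

variable {β : Type*} {par : β → β} {dep : β → ℕ} {root : β}

structure Conf (par : β → β) (dep : β → ℕ) (root : β) : Prop where
  par_root : par root = root
  dep_root : dep root = 0
  dep_par : ∀ i, i ≠ root → dep i = dep (par i) + 1

namespace Conf

lemma anc_refl (b : β) : Anc par b b := ⟨0, rfl⟩

lemma anc_parent (b : β) : Anc par (par b) b := ⟨1, rfl⟩

lemma anc_trans {a b c : β} (h1 : Anc par a b) (h2 : Anc par b c) : Anc par a c := by
  obtain ⟨n, hn⟩ := h1; obtain ⟨m, hm⟩ := h2
  exact ⟨n + m, by rw [Function.iterate_add_apply, hm, hn]⟩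

lemma dep_par_le (T : Conf par dep root) (x : β) : dep (par x) ≤ dep x := by
  by_cases hx : x = root
  · subst hx; rw [T.par_root]
  · rw [T.dep_par x hx]; omega

lemma dep_par_lt (T : Conf par dep root) {x : β} (hx : x ≠ root) : dep (par x) < dep x := by
  rw [T.dep_par x hx]; omega

lemma iter_root (T : Conf par dep root) (n : ℕ) : par^[n] root = root := by
  induction n with
  | zero => rfl
  | succ n ih => rw [Function.iterate_succ_apply, T.par_root, ih]

lemma anc_cases (T : Conf par dep root) {a b : β} (h : Anc par a b) : a = b ∨ (b ≠ root ∧ Anc par a (par b)) := by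
  obtain ⟨n, hn⟩ := h
  cases n with
  | zero => exact Or.inl hn.symm
  | succ m =>
    by_cases hb : b = root
    · subst hb
      left
      rw [T.iter_root] at hn
      exact hn.symm
    · right
      exact ⟨hb, ⟨m, by rwa [Function.iterate_succ_apply] at hn⟩⟩

lemma anc_dep_le (T : Conf par dep root) {a b : β} (h : Anc par a b) : dep a ≤ dep b := by
  obtain ⟨n, hn⟩ := h
  subst hn
  induction n with
  | zero => exact le_refl _
  | succ m ih =>
    rw [Function.iterate_succ_apply]
    calc dep (par^[m] (par b)) ≤ dep (par b) := by
          simpa [Function.iterate_succ_apply] using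
            (by
              clear ih
              induction m with
              | zero => exact le_refl _
              | succ k ih2 =>
                rw [Function.iterate_succ_apply']
                exact le_trans (T.dep_par_le _) ih2)
      _ ≤ dep b := T.dep_par_le b

lemma anc_dep_lt (T : Conf par dep root) {a b : β} (h : Anc par a b) (hne : a ≠ b) : dep a < dep b := by
  rcases T.anc_cases h with rfl | ⟨hb, h2⟩
  · exact absurd rfl hne
  · exact lt_of_le_of_lt (T.anc_dep_le h2) (T.dep_par_lt hb)

lemma anc_antisymm (T : Conf par dep root) {a b : β} (h1 : Anc par a b) (h2 : Anc par b a) : a = b := by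
  by_contra hne
  have := T.anc_dep_lt h1 hne
  have := T.anc_dep_lt h2 (Ne.symm hne)
  omega

lemma eq_of_anc_dep_le (T : Conf par dep root) {a b : β} (h : Anc par a b) (hd : dep b ≤ dep a) : a = b := by
  by_contra hne
  have := T.anc_dep_lt h hne
  omega

lemma root_ne_of_dep (T : Conf par dep root) {x : β} (h : dep x ≠ 0) : x ≠ root := fun hx => h (hx ▸ T.dep_root)

lemma eq_root_of_dep_zero (T : Conf par dep root) {x : β} (h : dep x = 0) : x = root := by
  by_contra hx
  rw [T.dep_par x hx] at h; omega

lemma anc_root (T : Conf par dep root) (b : β) : Anc par root b := by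
  generalize hn : dep b = n
  induction n using Nat.strong_induction_on generalizing b with
  | _ n ih =>
    by_cases hb : b = root
    · exact hb ▸ anc_refl b
    · exact anc_trans (ih (dep (par b)) (by rw [← hn]; exact T.dep_par_lt hb) (par b) rfl)
        (anc_parent b)

lemma anc_total {a b c : β} (h1 : Anc par a c) (h2 : Anc par b c) :
    Anc par a b ∨ Anc par b a := by
  obtain ⟨n, hn⟩ := h1; obtain ⟨m, hm⟩ := h2
  rcases le_total n m with h | h
  · right
    exact ⟨m - n, by rw [← hn, ← Function.iterate_add_apply, Nat.sub_add_cancel h, hm]⟩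
  · left
    exact ⟨n - m, by rw [← hm, ← Function.iterate_add_apply, Nat.sub_add_cancel h, hn]⟩

lemma anc_par_of_ne (T : Conf par dep root) {a b : β} (h : Anc par a b) (hne : a ≠ b) : Anc par a (par b) := by
  rcases T.anc_cases h with rfl | ⟨_, h2⟩
  · exact absurd rfl hne
  · exact h2

lemma anc_to_root (T : Conf par dep root) {a : β} (h : Anc par a root) : a = root := by
  obtain ⟨n, hn⟩ := h; rw [T.iter_root] at hn; exact hn.symm

end Conf

/-- the tree graph of a parent function -/
def TGr (par : β → β) : SimpleGraph β := SimpleGraph.fromRel (fun a b => par a = b)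

lemma tgr_adj (par : β → β) (a b : β) :
    (TGr par).Adj a b ↔ a ≠ b ∧ (par a = b ∨ par b = a) := Iff.rfl

lemma adj_par (T : Conf par dep root) {i : β} (hi : i ≠ root) : (TGr par).Adj i (par i) := by
  refine ⟨fun h => ?_, Or.inl rfl⟩
  · have := T.dep_par i hi; rw [← h] at this; omega

end TreeCore

section TreeGraph

open SimpleGraph

variable {β : Type*} {par : β → β} {dep : β → ℕ} {root : β}

/-- canonical walk from a node to the root -/
noncomputable def walkTo (T : Conf par dep root) : ∀ b : β, (TGr par).Walk b root
  | b =>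
    if h : b = root then h ▸ SimpleGraph.Walk.nil
    else SimpleGraph.Walk.cons (adj_par T h) (walkTo T (par b))
termination_by b => dep b
decreasing_by exact T.dep_par_lt h

lemma walkTo_root (T : Conf par dep root) : walkTo T root = SimpleGraph.Walk.nil := by
  rw [walkTo]; simp

lemma walkTo_ne (T : Conf par dep root) {b : β} (hb : b ≠ root) :
    walkTo T b = SimpleGraph.Walk.cons (adj_par T hb) (walkTo T (par b)) := by
  rw [walkTo]; simp [hb]

lemma mem_support_walkTo (T : Conf par dep root) {a : β} : ∀ {b : β},
    a ∈ (walkTo T b).support ↔ Anc par a b := by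
  intro b
  generalize hn : dep b = n
  induction n using Nat.strong_induction_on generalizing b with
  | _ n ih =>
    by_cases hb : b = root
    · subst hb
      rw [walkTo_root]
      simp only [SimpleGraph.Walk.support_nil, List.mem_singleton]
      constructor
      · rintro rfl; exact Conf.anc_refl a
      · intro h; exact T.anc_to_root h
    · rw [walkTo_ne T hb]
      simp only [SimpleGraph.Walk.support_cons, List.mem_cons]
      rw [ih (dep (par b)) (by rw [← hn]; exact T.dep_par_lt hb) rfl]
      constructor
      · rintro (rfl | h)
        · exact Conf.anc_refl a
        · exact Conf.anc_trans h (Conf.anc_parent b)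
      · intro h
        rcases T.anc_cases h with rfl | ⟨_, h2⟩
        · exact Or.inl rfl
        · exact Or.inr h2

lemma dep_le_of_mem_support_walkTo (T : Conf par dep root) {a b : β}
    (h : a ∈ (walkTo T b).support) : dep a ≤ dep b :=
  T.anc_dep_le ((mem_support_walkTo T).1 h)

lemma isPath_walkTo (T : Conf par dep root) : ∀ b : β, (walkTo T b).IsPath := by
  intro b
  generalize hn : dep b = n
  induction n using Nat.strong_induction_on generalizing b with
  | _ n ih =>
    by_cases hb : b = root
    · subst hb; rw [walkTo_root]; exact SimpleGraph.Walk.IsPath.nil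
    · rw [walkTo_ne T hb]
      refine SimpleGraph.Walk.IsPath.cons
        (ih (dep (par b)) (by rw [← hn]; exact T.dep_par_lt hb) (par b) rfl) ?_
      intro hmem
      have := dep_le_of_mem_support_walkTo T hmem
      have := T.dep_par_lt hb
      omega

lemma tgr_preconnected (T : Conf par dep root) : (TGr par).Preconnected := by
  intro a b
  exact ((walkTo T a).reachable).trans ((walkTo T b).reachable).symm

lemma par_eq_of_adj_of_depmax (T : Conf par dep root) {u z : β}
    (h : (TGr par).Adj u z) (hd : dep z ≤ dep u) : par u = z := by
  rcases h with ⟨hne, h | h⟩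
  · exact h
  · exfalso
    have hz : z ≠ root := by
      intro hz
      subst hz
      rw [T.par_root] at h
      exact hne h.symm
    have := T.dep_par z hz
    rw [h] at this
    omega

lemma cycle_aux (T : Conf par dep root) {u : β} (c : (TGr par).Walk u u)
    (hc : c.IsCycle) (hd : ∀ x ∈ c.support, dep x ≤ dep u) : False := by
  cases c with
  | nil => exact hc.ne_nil rfl
  | @cons _ x _ h q =>
    have hx : par u = x := by
      refine par_eq_of_adj_of_depmax T h (hd x ?_)
      simp [SimpleGraph.Walk.support_cons, q.start_mem_support]
    cases q with
    | nil => exact h.ne rfl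
    | @cons _ w _ h2 q2 =>
      obtain ⟨y, q', h', heq⟩ := SimpleGraph.Walk.exists_cons_eq_concat h2 q2
      have hyedge : s(y, u) ∈ (SimpleGraph.Walk.cons h2 q2).edges := by
        rw [heq, SimpleGraph.Walk.concat_eq_append]
        simp
      have hy : par u = y := by
        refine par_eq_of_adj_of_depmax T h'.symm (hd y ?_)
        have : y ∈ (SimpleGraph.Walk.cons h2 q2).support := by
          rw [heq, SimpleGraph.Walk.concat_eq_append]
          simp
        exact List.mem_cons_of_mem _ this
      have hnodup := hc.edges_nodup
      rw [SimpleGraph.Walk.edges_cons, List.nodup_cons] at hnodup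
      apply hnodup.1
      have : s(y, u) = s(u, x) := by rw [← hx, ← hy]; exact Sym2.eq_swap
      rw [← this]
      exact hyedge

lemma tgr_acyclic (T : Conf par dep root) : (TGr par).IsAcyclic := by
  intro v c hc
  classical
  -- pick the vertex of maximal depth on the cycle
  have hsupne : c.support ≠ [] := c.support_ne_nil
  obtain ⟨u, hu, hmax⟩ :
      ∃ u ∈ c.support, ∀ x ∈ c.support, dep x ≤ dep u := by
    match hh : c.support.argmax dep with
    | none => exact absurd (List.argmax_eq_none.1 hh) hsupne
    | some m =>
      exact ⟨m, List.argmax_mem hh, fun x hx => List.le_of_mem_argmax hx hh⟩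
  have hc' : (c.rotate u hu).IsCycle := hc.rotate hu
  set c' := c.rotate u hu with hc'def
  have hsup' : ∀ x ∈ c'.support, dep x ≤ dep u := by
    intro x hx
    have hperm := c.support_rotate u hu
    rw [SimpleGraph.Walk.support_eq_cons c'] at hx
    rcases List.mem_cons.1 hx with rfl | h
    · exact le_refl _
    · exact hmax x (List.mem_of_mem_tail (hperm.mem_iff.1 h))
  exact cycle_aux T c' hc' hsup'


lemma tgr_connected (T : Conf par dep root) : (TGr par).Connected := by
  haveI : Nonempty β := ⟨root⟩
  exact ⟨tgr_preconnected T⟩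

lemma tgr_isTree (T : Conf par dep root) : (TGr par).IsTree :=
  ⟨tgr_connected T, tgr_acyclic T⟩

lemma path_eq_walkTo (T : Conf par dep root) {b : β} (p : (TGr par).Walk b root)
    (hp : p.IsPath) : p = walkTo T b := by
  have := (tgr_acyclic T).path_unique ⟨p, hp⟩ ⟨walkTo T b, isPath_walkTo T b⟩
  exact congrArg Subtype.val this

lemma subtree_set_eq (T : Conf par dep root) (j : β) :
    {K : β | ∀ p : (TGr par).Walk K root, p.IsPath → j ∈ p.support} =
      {K : β | Anc par j K} := by
  ext K
  simp only [Set.mem_setOf_eq]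
  constructor
  · intro h
    exact (mem_support_walkTo T).1 (h (walkTo T K) (isPath_walkTo T K))
  · intro h p hp
    rw [path_eq_walkTo T p hp]
    exact (mem_support_walkTo T).2 h

lemma parent_mem_path (T : Conf par dep root) {i : β} (hi : i ≠ root)
    (p : (TGr par).Walk i root) (hp : p.IsPath) : par i ∈ p.support := by
  rw [path_eq_walkTo T p hp]
  exact (mem_support_walkTo T).2 (Conf.anc_parent i)

section JTsec

variable {γ : Type*}

/-- the junction-tree condition -/
def IsJT (par : β → β) (root : β) (Kf : β → Set γ) : Prop :=
  ∀ i, i ≠ root → ∀ v ∈ Kf i, (∃ k, ¬ Anc par i k ∧ v ∈ Kf k) → v ∈ Kf (par i)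

variable {Kf : β → Set γ}

/-- climbing lemma: a vertex appearing at `x` (below `c`) and at `y` (not below `c`)
appears at `c`. -/
lemma jt_climb (T : Conf par dep root) (hjt : IsJT par root Kf) {v : γ} {c y : β}
    (hy : v ∈ Kf y) (hny : ¬ Anc par c y) :
    ∀ {x : β}, v ∈ Kf x → Anc par c x → v ∈ Kf c := by
  intro x
  generalize hn : dep x = n
  induction n using Nat.strong_induction_on generalizing x with
  | _ n ih =>
    intro hvx hanc
    by_cases hxc : x = c
    · exact hxc ▸ hvx
    · have hxroot : x ≠ root := by
        rintro rfl
        exact hny (Conf.anc_trans hanc (T.anc_root y))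
      have hnxy : ¬ Anc par x y := fun hh => hny (Conf.anc_trans hanc hh)
      have hpar : v ∈ Kf (par x) := hjt x hxroot v hvx ⟨y, hnxy, hy⟩
      exact ih (dep (par x)) (by rw [← hn]; exact T.dep_par_lt hxroot) rfl hpar
        (T.anc_par_of_ne hanc (Ne.symm hxc))

/-- betweenness: a vertex appearing at `m` and at `b` (below `m`) appears at every
node `z` between them. -/
lemma jt_between (T : Conf par dep root) (hjt : IsJT par root Kf) {v : γ} {m b z : β}
    (hm : v ∈ Kf m) (hb : v ∈ Kf b) (hmb : Anc par m b)
    (hmz : Anc par m z) (hzb : Anc par z b) : v ∈ Kf z := by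
  by_cases hzm : z = m
  · exact hzm ▸ hm
  · have : ¬ Anc par z m := fun hh => hzm (T.anc_antisymm hh hmz)
    exact jt_climb T hjt hm this hb hzb

/-- separator lemma: if `v` appears below `c` and outside the subtree of `c`,
then `v ∈ Kf c ∩ Kf (par c)`. -/
lemma jt_sep (T : Conf par dep root) (hjt : IsJT par root Kf) {v : γ} {c x y : β}
    (hvx : v ∈ Kf x) (hcx : Anc par c x) (hvy : v ∈ Kf y) (hcy : ¬ Anc par c y) :
    v ∈ Kf c ∧ (c ≠ root → v ∈ Kf (par c)) := by
  have hvc : v ∈ Kf c := jt_climb T hjt hvy hcy hvx hcx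
  exact ⟨hvc, fun hcroot => hjt c hcroot v hvc ⟨y, hcy, hvy⟩⟩

/-- connectivity of the set of nodes containing a fixed vertex -/
lemma jt_induce_connected (T : Conf par dep root) (hjt : IsJT par root Kf) (v : γ)
    (hne : ∃ i, v ∈ Kf i) : ((TGr par).induce {i : β | v ∈ Kf i}).Connected := by
  classical
  set Cv : Set β := {i : β | v ∈ Kf i} with hCv
  have hCvne : (dep '' Cv).Nonempty := by
    obtain ⟨i, hi⟩ := hne
    exact ⟨dep i, ⟨i, hi, rfl⟩⟩
  obtain ⟨t, htC, htdep⟩ : ∃ t ∈ Cv, dep t = sInf (dep '' Cv) := by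
    obtain ⟨t, ht, hd⟩ := Nat.sInf_mem hCvne
    exact ⟨t, ht, hd⟩
  have htmin : ∀ i ∈ Cv, dep t ≤ dep i := by
    intro i hi
    rw [htdep]
    exact Nat.sInf_le ⟨i, hi, rfl⟩
  have key : ∀ n, ∀ i, ∀ hi : i ∈ Cv, dep i = n →
      ((TGr par).induce Cv).Reachable ⟨i, hi⟩ ⟨t, htC⟩ := by
    intro n
    induction n using Nat.strong_induction_on with
    | _ n ih =>
      intro i hi hdep
      by_cases hit : i = t
      · subst hit
        rfl
      · have hnAnc : ¬ Anc par i t := fun h => hit (T.eq_of_anc_dep_le h (htmin i hi))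
        have hiroot : i ≠ root := by
          rintro rfl
          exact hnAnc (T.anc_root t)
        have hpar : v ∈ Kf (par i) := hjt i hiroot v hi ⟨t, hnAnc, htC⟩
        have hadj : ((TGr par).induce Cv).Adj ⟨i, hi⟩ ⟨par i, hpar⟩ := by
          exact adj_par T hiroot
        exact hadj.reachable.trans
          (ih (dep (par i)) (by rw [← hdep]; exact T.dep_par_lt hiroot) (par i) hpar rfl)
  haveI : Nonempty ↑Cv := ⟨⟨t, htC⟩⟩
  refine ⟨fun a b => ?_⟩
  exact (key (dep a.1) a.1 a.2 rfl).trans (key (dep b.1) b.1 b.2 rfl).symm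

end JTsec

end TreeGraph

section Rehang

variable {β : Type*} {γ : Type*} {par : β → β} {dep : β → ℕ} {root : β} {Kf : β → Set γ}

lemma iter_eq_of_not_anc {k₀ : β} (hb : ∀ b, ¬ Anc par k₀ b → ∀ n : ℕ, True) : True := trivial

lemma update_iter_eq_of_not_anc {k₀ q : β} :
    ∀ (n : ℕ) (b : β), ¬ Anc par k₀ b →
      (Function.update par k₀ q)^[n] b = par^[n] b := by
  intro n
  induction n with
  | zero => intro b _; rfl
  | succ m ih =>
    intro b hb
    have hbk : b ≠ k₀ := fun h => hb (h ▸ Conf.anc_refl b)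
    rw [Function.iterate_succ_apply, Function.iterate_succ_apply,
      Function.update_of_ne hbk]
    exact ih (par b) (fun h => hb (Conf.anc_trans h (Conf.anc_parent b)))

lemma anc_update_iff_of_not_anc {k₀ q a b : β} (hb : ¬ Anc par k₀ b) :
    Anc (Function.update par k₀ q) a b ↔ Anc par a b := by
  constructor
  · rintro ⟨n, hn⟩
    exact ⟨n, by rwa [update_iter_eq_of_not_anc n b hb] at hn⟩
  · rintro ⟨n, hn⟩
    exact ⟨n, by rwa [update_iter_eq_of_not_anc n b hb]⟩

lemma anc_update_iff_of_anc (T : Conf par dep root) {k₀ q a b : β}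
    (hk₀ : k₀ ≠ root) (hnq : ¬ Anc par k₀ q) (hb : Anc par k₀ b) :
    Anc (Function.update par k₀ q) a b ↔
      (Anc par a b ∧ Anc par k₀ a) ∨ Anc par a q := by
  classical
  set par' := Function.update par k₀ q with hpar'
  -- minimal n₀ with par^[n₀] b = k₀
  have hex : ∃ n : ℕ, par^[n] b = k₀ := hb
  set n₀ := Nat.find hex with hn₀def
  have hn₀ : par^[n₀] b = k₀ := Nat.find_spec hex
  have hn₀min : ∀ m < n₀, par^[m] b ≠ k₀ := fun m hm => Nat.find_min hex hm
  -- iterates agree up to n₀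
  have hagree : ∀ n ≤ n₀, par'^[n] b = par^[n] b := by
    intro n hn
    induction n with
    | zero => rfl
    | succ m ih =>
      rw [Function.iterate_succ_apply', Function.iterate_succ_apply',
        ih (Nat.le_of_succ_le hn)]
      exact Function.update_of_ne (hn₀min m (Nat.lt_of_succ_le hn)) _ _
  have hn₀succ : par'^[n₀ + 1] b = q := by
    rw [Function.iterate_succ_apply', hagree n₀ le_rfl, hn₀]
    exact Function.update_self k₀ q par
  have hafter : ∀ m : ℕ, par'^[m + (n₀ + 1)] b = par^[m] q := by
    intro m
    rw [Function.iterate_add_apply, hn₀succ]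
    exact update_iter_eq_of_not_anc m q hnq
  constructor
  · rintro ⟨n, hn⟩
    rcases le_or_gt n n₀ with h | h
    · left
      refine ⟨⟨n, by rwa [hagree n h] at hn⟩, ⟨n₀ - n, ?_⟩⟩
      rw [← hn, hagree n h, ← Function.iterate_add_apply, Nat.sub_add_cancel h, hn₀]
    · right
      obtain ⟨m, rfl⟩ : ∃ m, n = m + (n₀ + 1) := ⟨n - (n₀ + 1), by omega⟩
      exact ⟨m, by rwa [hafter m] at hn⟩
  · rintro (⟨⟨n, hn⟩, hk₀a⟩ | ⟨m, hm⟩)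
    · have hnle : n ≤ n₀ := by
        by_contra hlt
        push_neg at hlt
        have : par^[n] b = par^[n - n₀] k₀ := by
          rw [← hn₀, ← Function.iterate_add_apply]
          congr 1
          omega
        have hank : Anc par a (par k₀) := by
          have : par^[n - n₀ - 1] (par k₀) = a := by
            rw [← hn, this]
            rw [← Function.iterate_succ_apply]
            congr 1
            omega
          exact ⟨n - n₀ - 1, this⟩
        have h1 := T.anc_dep_le hank
        have h2 := T.dep_par_lt hk₀
        have h3 := T.anc_dep_le hk₀a
        omega
      exact ⟨n, by rwa [hagree n hnle]⟩
    · exact ⟨m + (n₀ + 1), by rwa [hafter m]⟩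

lemma rehang (T : Conf par dep root) (hjt : IsJT par root Kf)
    {k₀ q : β} (hk₀ : k₀ ≠ root) (hnq : ¬ Anc par k₀ q) (hqk : Anc par q k₀)
    (hdq : dep q + 1 < dep k₀) (hSq : Kf k₀ ∩ Kf (par k₀) ⊆ Kf q) :
    ∃ (par2 : β → β) (dep2 : β → ℕ), Conf par2 dep2 root ∧ IsJT par2 root Kf ∧
      dep2 k₀ < dep k₀ ∧ ∀ x, dep2 x ≤ dep x := by
  classical
  set δ := dep k₀ - (dep q + 1) with hδ
  have hδpos : 0 < δ := by omega
  set par' := Function.update par k₀ q with hpar'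
  set dep' := fun x => if Anc par k₀ x then dep x - δ else dep x with hdep'
  have hdepk : ∀ x, Anc par k₀ x → dep k₀ ≤ dep x := fun x h => T.anc_dep_le h
  have hT' : Conf par' dep' root := by
    constructor
    · -- par_root
      rw [hpar', Function.update_of_ne (Ne.symm hk₀)]
      exact T.par_root
    · -- dep_root
      have : ¬ Anc par k₀ root := fun h => hk₀ (T.anc_to_root h)
      simp only [hdep', if_neg this]
      exact T.dep_root
    · -- dep_par
      intro i hi
      by_cases hik : i = k₀
      · have e1 : par' k₀ = q := Function.update_self k₀ q par
        have e2 : dep' k₀ = dep k₀ - δ := by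
          simp only [hdep', if_pos (Conf.anc_refl k₀)]
        have e3 : dep' q = dep q := by simp only [hdep', if_neg hnq]
        rw [hik, e1, e2, e3]
        omega
      · have hpar'i : par' i = par i := Function.update_of_ne hik _ _
        rw [hpar'i]
        by_cases hanc : Anc par k₀ i
        · have hancp : Anc par k₀ (par i) := T.anc_par_of_ne hanc (fun h => hik h.symm)
          simp only [hdep', if_pos hanc, if_pos hancp]
          have h1 := T.dep_par i hi
          have h2 := hdepk _ hancp
          omega
        · have hancp : ¬ Anc par k₀ (par i) := by
            intro h
            exact hanc (Conf.anc_trans h (Conf.anc_parent i))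
          simp only [hdep', if_neg hanc, if_neg hancp]
          exact T.dep_par i hi
  have hjt' : IsJT par' root Kf := by
    intro i hi v hvi ⟨k, hnk, hvk⟩
    by_cases hik : i = k₀
    · rw [hik] at hvi hnk ⊢
      -- goal : v ∈ Kf (par' k₀) = Kf q
      have hgoal : par' k₀ = q := Function.update_self k₀ q par
      rw [hgoal]
      -- k is not below k₀ (old): since Anc par k₀ k would give Anc par' k₀ k
      have hnk' : ¬ Anc par k₀ k := by
        intro h
        apply hnk
        rw [anc_update_iff_of_anc T hk₀ hnq h]
        exact Or.inl ⟨h, Conf.anc_refl k₀⟩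
      have hvp : v ∈ Kf (par k₀) := hjt k₀ hk₀ v hvi ⟨k, hnk', hvk⟩
      exact hSq ⟨hvi, hvp⟩
    · have hpar'i : par' i = par i := Function.update_of_ne hik _ _
      rw [hpar'i]
      by_cases hok : Anc par i k
      · -- old-inside, new-outside: the interesting case
        have hkk : Anc par k₀ k := by
          by_contra hkk
          exact hnk ((anc_update_iff_of_not_anc hkk).2 hok)
        rw [anc_update_iff_of_anc T hk₀ hnq hkk] at hnk
        push_neg at hnk
        obtain ⟨hnk1, hnk2⟩ := hnk
        have hnik₀ : ¬ Anc par k₀ i := fun h => (hnk1 hok) h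
        have hik₀ : Anc par i k₀ := by
          rcases Conf.anc_total (par := par) hok hkk with h | h
          · exact h
          · exact absurd h hnik₀
        -- v is in every clique between k and i; in particular k₀ and par k₀
        have hvk₀ : v ∈ Kf k₀ :=
          jt_between T hjt hvi hvk hok hik₀ hkk
        have hvpk₀ : v ∈ Kf (par k₀) := by
          refine jt_between T hjt hvi hvk hok ?_ ?_
          · exact T.anc_par_of_ne hik₀ (fun h => hik h)
          · exact Conf.anc_trans (Conf.anc_parent k₀) hkk
        have hvq : v ∈ Kf q := hSq ⟨hvk₀, hvpk₀⟩
        -- q is an ancestor of i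
        have hqi : Anc par q i := by
          have hqk₀ : Anc par q k₀ := hqk
          rcases Conf.anc_total (par := par) hik₀ hqk₀ with h | h
          · exact absurd h hnk2
          · exact h
        -- now climb between q and i to get par i
        refine jt_between T hjt hvq hvi hqi ?_ (Conf.anc_parent i)
        refine T.anc_par_of_ne hqi ?_
        rintro rfl
        exact hnk2 (Conf.anc_refl q)
      · exact hjt i hi v hvi ⟨k, hok, hvk⟩
  refine ⟨par', dep', hT', hjt', ?_, ?_⟩
  · simp only [hdep', if_pos (Conf.anc_refl k₀)]
    omega
  · intro x
    by_cases h : Anc par k₀ x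
    · simp only [hdep', if_pos h]
      omega
    · simp only [hdep', if_neg h]
      exact le_rfl

end Rehang

section Reach

variable {α : Type*} (G : SimpleGraph α)

/-- vertices reachable from `u` by walks staying inside `R` -/
def ReachIn (R : Set α) (u : α) : Set α :=
  {x | ∃ p : G.Walk u x, ∀ z ∈ p.support, z ∈ R}

variable {G}

lemma reachIn_self {R : Set α} {u : α} (hu : u ∈ R) : u ∈ ReachIn G R u :=
  ⟨SimpleGraph.Walk.nil, by simp [hu]⟩

lemma reachIn_subset {R : Set α} {u : α} : ReachIn G R u ⊆ R := by
  rintro x ⟨p, hp⟩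
  exact hp x p.end_mem_support

lemma reachIn_adj {R : Set α} {u x y : α} (hx : x ∈ ReachIn G R u) (hxy : G.Adj x y)
    (hy : y ∈ R) : y ∈ ReachIn G R u := by
  obtain ⟨p, hp⟩ := hx
  refine ⟨p.concat hxy, ?_⟩
  intro z hz
  rw [SimpleGraph.Walk.support_concat, List.mem_append] at hz
  rcases hz with hz | hz
  · exact hp z hz
  · rw [List.mem_singleton] at hz
    exact hz ▸ hy

lemma reachIn_trans {R : Set α} {u x y : α} (hx : x ∈ ReachIn G R u)
    (hy : y ∈ ReachIn G R x) : y ∈ ReachIn G R u := by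
  obtain ⟨p, hp⟩ := hx; obtain ⟨q, hq⟩ := hy
  refine ⟨p.append q, ?_⟩
  intro z hz
  rcases List.mem_append.1 (by
    rw [← SimpleGraph.Walk.support_append]; exact hz) with hz | hz
  · exact hp z hz
  · exact hq z (List.mem_of_mem_tail hz)

lemma reachIn_symm {R : Set α} {u x : α} (hx : x ∈ ReachIn G R u) :
    u ∈ ReachIn G R x := by
  obtain ⟨p, hp⟩ := hx
  refine ⟨p.reverse, fun z hz => hp z ?_⟩
  rw [SimpleGraph.Walk.support_reverse] at hz
  exact List.mem_reverse.1 hz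

lemma reachIn_eq {R : Set α} {u x : α} (hx : x ∈ ReachIn G R u) :
    ReachIn G R x = ReachIn G R u := by
  ext z
  exact ⟨fun h => reachIn_trans hx h, fun h => reachIn_trans (reachIn_symm hx) h⟩

/-- a walk from inside `ReachIn G R u` to outside it crosses the boundary -/
lemma exists_boundary {R : Set α} {u₀ : α} :
    ∀ {x w : α} (p : G.Walk x w), x ∈ ReachIn G R u₀ → w ∉ ReachIn G R u₀ →
      ∃ y ∈ p.support, y ∉ ReachIn G R u₀ ∧ ∃ x' ∈ ReachIn G R u₀, G.Adj x' y := by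
  intro x w p
  induction p with
  | nil => intro hx hw; exact absurd hx hw
  | @cons a b c h p ih =>
    intro hx hw
    by_cases hb : b ∈ ReachIn G R u₀
    · obtain ⟨y, hy1, hy2, hy3⟩ := ih hb hw
      exact ⟨y, List.mem_cons_of_mem _ hy1, hy2, hy3⟩
    · exact ⟨b, by simp [SimpleGraph.Walk.support_cons, p.start_mem_support], hb, a, hx, h⟩

end Reach

section Shortcut

variable {α : Type*} {G : SimpleGraph α}

lemma reachIn_support {R : Set α} :
    ∀ {u w : α} (p : G.Walk u w), (∀ z ∈ p.support, z ∈ R) →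
      ∀ z ∈ p.support, z ∈ ReachIn G R u := by
  intro u w p
  induction p with
  | nil =>
    intro h z hz
    rw [SimpleGraph.Walk.support_nil, List.mem_singleton] at hz
    subst hz
    exact reachIn_self (h _ (by simp))
  | @cons a b c h q ih =>
    intro hsup z hz
    have ha : a ∈ R := hsup a (by simp)
    have hb : b ∈ ReachIn G R a :=
      reachIn_adj (reachIn_self ha) h (hsup b (by simp [q.start_mem_support]))
    rcases List.mem_cons.1 hz with rfl | hz
    · exact reachIn_self ha
    · exact reachIn_trans hb (ih (fun z hz => hsup z (List.mem_cons_of_mem _ hz)) z hz)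

lemma edge_getVert_mem_edges :
    ∀ {u w : α} (p : G.Walk u w) {i : ℕ}, i < p.length →
      s(p.getVert i, p.getVert (i + 1)) ∈ p.edges := by
  intro u w p
  induction p with
  | nil => intro i hi; simp at hi
  | @cons a b c h q ih =>
    intro i hi
    cases i with
    | zero =>
      rw [SimpleGraph.Walk.getVert_zero, SimpleGraph.Walk.getVert_cons_succ, SimpleGraph.Walk.getVert_zero]
      simp
    | succ j =>
      rw [SimpleGraph.Walk.getVert_cons_succ, SimpleGraph.Walk.getVert_cons_succ]
      rw [SimpleGraph.Walk.edges_cons, List.mem_cons]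
      right
      exact ih (by simpa [SimpleGraph.Walk.length_cons, Nat.succ_lt_succ_iff] using hi)

lemma getVert_takeUntil_length [DecidableEq α] {u w z : α} (p : G.Walk u w)
    (hz : z ∈ p.support) : p.getVert (p.takeUntil z hz).length = z := by
  obtain ⟨n, hn⟩ : ∃ n, (p.takeUntil z hz).length = n := ⟨_, rfl⟩
  rw [hn]
  conv_lhs => rw [← SimpleGraph.Walk.take_spec p hz]
  rw [SimpleGraph.Walk.getVert_append, hn, if_neg (lt_irrefl n), Nat.sub_self,
    SimpleGraph.Walk.getVert_zero]

lemma length_takeUntil_add [DecidableEq α] {u w z : α} (p : G.Walk u w)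
    (hz : z ∈ p.support) :
    (p.takeUntil z hz).length + (p.dropUntil z hz).length = p.length := by
  conv_rhs => rw [← SimpleGraph.Walk.take_spec p hz]
  rw [SimpleGraph.Walk.length_append]

/-- one-sided shortcut construction -/
lemma shortcut_aux [DecidableEq α] {x y u v : α} (p : G.Walk x y)
    (hu : u ∈ p.support) (hv : v ∈ p.support) (huv : G.Adj u v)
    (hlt : (p.takeUntil u hu).length + 1 < (p.takeUntil v hv).length) :
    ∃ q : G.Walk x y, q.length < p.length ∧ ∀ z ∈ q.support, z ∈ p.support := by
  refine ⟨(p.takeUntil u hu).append (SimpleGraph.Walk.cons huv (p.dropUntil v hv)), ?_, ?_⟩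
  · rw [SimpleGraph.Walk.length_append, SimpleGraph.Walk.length_cons]
    have h1 := length_takeUntil_add p hv
    omega
  · intro z hz
    rw [SimpleGraph.Walk.mem_support_append_iff] at hz
    rcases hz with hz | hz
    · exact SimpleGraph.Walk.support_takeUntil_subset p hu hz
    · rcases List.mem_cons.1 hz with rfl | hz
      · exact hu
      · exact SimpleGraph.Walk.support_dropUntil_subset p hv hz

/-- a chord of a path yields a strictly shorter connecting walk -/
lemma shortcut [DecidableEq α] {x y u v : α} (p : G.Walk x y) (hp : p.IsPath)
    (hu : u ∈ p.support) (hv : v ∈ p.support) (huv : G.Adj u v)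
    (he : s(u, v) ∉ p.edges) :
    ∃ q : G.Walk x y, q.length < p.length ∧ ∀ z ∈ q.support, z ∈ p.support := by
  set du := (p.takeUntil u hu).length with hdu
  set dv := (p.takeUntil v hv).length with hdv
  have hgu : p.getVert du = u := getVert_takeUntil_length p hu
  have hgv : p.getVert dv = v := getVert_takeUntil_length p hv
  have hdune : du ≠ dv := by
    intro h
    apply huv.ne
    rw [← hgu, ← hgv, h]
  have hdul : du ≤ p.length := SimpleGraph.Walk.length_takeUntil_le p hu
  have hdvl : dv ≤ p.length := SimpleGraph.Walk.length_takeUntil_le p hv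
  have hne1 : du + 1 ≠ dv := by
    intro h
    apply he
    have : dv ≤ p.length := hdvl
    have := edge_getVert_mem_edges p (i := du) (by omega)
    rwa [hgu, h, hgv] at this
  have hne2 : dv + 1 ≠ du := by
    intro h
    apply he
    have := edge_getVert_mem_edges p (i := dv) (by omega)
    rw [hgv, h, hgu] at this
    rwa [Sym2.eq_swap] at this
  rcases Nat.lt_or_ge du dv with h | h
  · exact shortcut_aux p hu hv huv (by omega)
  · have : dv < du := by omega
    obtain ⟨q, hq1, hq2⟩ := shortcut_aux p hv hu huv.symm (by omega)
    exact ⟨q, hq1, hq2⟩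

end Shortcut

section Dirac

variable {α : Type*} [Fintype α] {G : SimpleGraph α}

/-- `v` is simplicial in the induced subgraph on `W` -/
def SimplIn (G : SimpleGraph α) (W : Set α) (v : α) : Prop :=
  v ∈ W ∧ ∀ x ∈ W, ∀ y ∈ W, G.Adj v x → G.Adj v y → x ≠ y → G.Adj x y

def CompleteIn (G : SimpleGraph α) (W : Set α) : Prop :=
  ∀ x ∈ W, ∀ y ∈ W, x ≠ y → G.Adj x y

lemma walk_support_pair {a b : α} (p : G.Walk a b) (hne : a ≠ b)
    (hsup : ∀ z ∈ p.support, z = a ∨ z = b) : G.Adj a b := by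
  cases p with
  | nil => exact absurd rfl hne
  | @cons _ c _ h q =>
    rcases hsup c (by simp [q.start_mem_support]) with rfl | rfl
    · exact absurd rfl h.ne
    · exact h

/-- adjacent vertex of a walk of length one -/
lemma adj_of_walk_length_one {a b : α} (p : G.Walk a b) (h : p.length = 1) :
    G.Adj a b := by
  have h0 := p.adj_getVert_succ (i := 0) (by omega)
  rw [SimpleGraph.Walk.getVert_zero] at h0
  have h1 : p.getVert 1 = b := p.getVert_of_length_le (by omega)
  rwa [h1] at h0

theorem dirac_rec (hch : Chordal G) :
    ∀ n (W : Set α), W.ncard = n → W.Nonempty →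
      CompleteIn G W ∨ ∃ va vb, va ∈ W ∧ vb ∈ W ∧ va ≠ vb ∧ ¬ G.Adj va vb ∧
        SimplIn G W va ∧ SimplIn G W vb := by
  intro n
  induction n using Nat.strong_induction_on with
  | _ n ih =>
    intro W hWcard hWne
    by_cases hcomp : CompleteIn G W
    · exact Or.inl hcomp
    · right
      rw [CompleteIn] at hcomp
      push_neg at hcomp
      obtain ⟨a, haW, b, hbW, hab, hnadj⟩ := hcomp
      classical
      -- separators
      set Sep : Set α → Prop :=
        fun S => ∀ p : G.Walk a b, (∀ z ∈ p.support, z ∈ W) → ∃ z ∈ p.support, z ∈ S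
        with hSepdef
      have hfull : Sep (W \ {a, b}) := by
        intro p hp
        by_contra hno
        push_neg at hno
        apply hnadj
        refine walk_support_pair p hab ?_
        intro z hz
        have hzW := hp z hz
        have := hno z hz
        simp only [Set.mem_diff, Set.mem_insert_iff, Set.mem_singleton_iff, not_and,
          not_not] at this
        rcases this hzW with h | h
        · exact Or.inl h
        · exact Or.inr h
      -- minimum size separator
      have hPne : ∃ m, ∃ S, S ⊆ W \ {a, b} ∧ Sep S ∧ S.ncard = m :=
        ⟨(W \ {a, b}).ncard, W \ {a, b}, le_refl _, hfull, rfl⟩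
      obtain ⟨S, hSsub, hSsep, hScard⟩ := Nat.find_spec hPne
      have hSmin : ∀ s ∈ S, ¬ Sep (S \ {s}) := by
        intro s hs hsep
        have hlt : (S \ {s}).ncard < Nat.find hPne := by
          rw [← hScard]
          exact Set.ncard_diff_singleton_lt_of_mem hs (Set.toFinite S)
        exact Nat.find_min hPne hlt ⟨S \ {s},
          Set.Subset.trans (Set.diff_subset) hSsub, hsep, rfl⟩
      have haS : a ∉ S := fun h => by simpa using (hSsub h).2
      have hbS : b ∉ S := fun h => by simpa using (hSsub h).2
      have hSW : S ⊆ W := fun z hz => (hSsub hz).1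
      -- components of a and b
      set Ca := ReachIn G (W \ S) a with hCa
      set Cb := ReachIn G (W \ S) b with hCb
      have haCa : a ∈ Ca := reachIn_self ⟨haW, haS⟩
      have hbCb : b ∈ Cb := reachIn_self ⟨hbW, hbS⟩
      have hCaW : Ca ⊆ W \ S := reachIn_subset
      have hCbW : Cb ⊆ W \ S := reachIn_subset
      have hbnCa : b ∉ Ca := by
        rintro ⟨p, hp⟩
        obtain ⟨z, hz1, hz2⟩ := hSsep p (fun z hz => (hp z hz).1)
        exact (hp z hz1).2 hz2
      have hdisj : ∀ z, z ∈ Ca → z ∈ Cb → False := by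
        intro z hza hzb
        exact hbnCa (reachIn_trans hza (reachIn_symm hzb))
      -- every separator vertex has neighbors in both components
      have hnbr : ∀ s ∈ S, (∃ x ∈ Ca, G.Adj x s) ∧ (∃ x ∈ Cb, G.Adj x s) := by
        intro s hs
        have := hSmin s hs
        simp only [hSepdef] at this
        push_neg at this
        obtain ⟨p, hpW, hpavoid⟩ := this
        constructor
        · obtain ⟨y, hy1, hy2, x', hx'1, hx'2⟩ := exists_boundary p haCa hbnCa
          have hyW : y ∈ W := hpW y hy1
          have hyS : y ∈ S := by
            by_contra hyS
            exact hy2 (reachIn_adj hx'1 hx'2 ⟨hyW, hyS⟩)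
          have hys : y = s := by
            have := hpavoid y hy1
            simp only [Set.mem_diff, Set.mem_singleton_iff, not_and, not_not] at this
            exact this hyS
          exact ⟨x', hx'1, hys ▸ hx'2⟩
        · have hanCb : a ∉ Cb := fun h => hbnCa (reachIn_symm h)
          obtain ⟨y, hy1, hy2, x', hx'1, hx'2⟩ := exists_boundary p.reverse hbCb hanCb
          rw [SimpleGraph.Walk.support_reverse, List.mem_reverse] at hy1
          have hyW : y ∈ W := hpW y hy1
          have hyS : y ∈ S := by
            by_contra hyS
            exact hy2 (reachIn_adj hx'1 hx'2 ⟨hyW, hyS⟩)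
          have hys : y = s := by
            have := hpavoid y hy1
            simp only [Set.mem_diff, Set.mem_singleton_iff, not_and, not_not] at this
            exact this hyS
          exact ⟨x', hx'1, hys ▸ hx'2⟩
      -- S is a clique
      have hSclique : ∀ x ∈ S, ∀ y ∈ S, x ≠ y → G.Adj x y := by
        intro x hx y hy hxyne
        by_contra hxy
        obtain ⟨⟨xa, hxa, hxa2⟩, ⟨xb, hxb, hxb2⟩⟩ := hnbr x hx
        obtain ⟨⟨ya, hya, hya2⟩, ⟨yb, hyb, hyb2⟩⟩ := hnbr y hy
        have hxCa : x ∉ Ca := fun h => (hCaW h).2 hx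
        have hyCa : y ∉ Ca := fun h => (hCaW h).2 hy
        have hxCb : x ∉ Cb := fun h => (hCbW h).2 hx
        have hyCb : y ∉ Cb := fun h => (hCbW h).2 hy
        -- minimal path through Ca from x to y
        have hApne : ∃ m, ∃ p : G.Walk x y, p.IsPath ∧
            (∀ z ∈ p.support, z ∈ insert x (insert y Ca)) ∧ p.length = m := by
          obtain ⟨q, hq⟩ : ya ∈ ReachIn G (W \ S) xa := by
            rw [reachIn_eq hxa]
            exact hya
          have hqsup : ∀ z ∈ q.support, z ∈ Ca := by
            intro z hz
            have := reachIn_support q hq z hz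
            rwa [reachIn_eq hxa] at this
          refine ⟨_, ((SimpleGraph.Walk.cons hxa2.symm (q.concat hya2)).toPath : G.Walk x y),
            ((SimpleGraph.Walk.cons hxa2.symm (q.concat hya2)).toPath).2, fun z hz => ?_, rfl⟩
          have hz2 := SimpleGraph.Walk.support_toPath_subset _ hz
          rcases List.mem_cons.1 hz2 with rfl | hz3
          · exact Set.mem_insert _ _
          · rw [SimpleGraph.Walk.support_concat, List.mem_append] at hz3
            rcases hz3 with hz4 | hz4
            · exact Set.mem_insert_of_mem _ (Set.mem_insert_of_mem _ (hqsup z hz4))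
            · rw [List.mem_singleton] at hz4
              exact hz4 ▸ Set.mem_insert_of_mem _ (Set.mem_insert _ _)
        obtain ⟨pA, hpA, hpAsup, hpAlen⟩ := Nat.find_spec hApne
        have hpAmin : ∀ m < Nat.find hApne, ¬ ∃ p : G.Walk x y, p.IsPath ∧
            (∀ z ∈ p.support, z ∈ insert x (insert y Ca)) ∧ p.length = m :=
          fun m hm => Nat.find_min hApne hm
        -- minimal path through Cb from y to x
        have hBpne : ∃ m, ∃ p : G.Walk y x, p.IsPath ∧
            (∀ z ∈ p.support, z ∈ insert y (insert x Cb)) ∧ p.length = m := by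
          obtain ⟨q, hq⟩ : xb ∈ ReachIn G (W \ S) yb := by
            rw [reachIn_eq hyb]
            exact hxb
          have hqsup : ∀ z ∈ q.support, z ∈ Cb := by
            intro z hz
            have := reachIn_support q hq z hz
            rwa [reachIn_eq hyb] at this
          refine ⟨_, ((SimpleGraph.Walk.cons hyb2.symm (q.concat hxb2)).toPath : G.Walk y x),
            ((SimpleGraph.Walk.cons hyb2.symm (q.concat hxb2)).toPath).2, fun z hz => ?_, rfl⟩
          have hz2 := SimpleGraph.Walk.support_toPath_subset _ hz
          rcases List.mem_cons.1 hz2 with rfl | hz3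
          · exact Set.mem_insert _ _
          · rw [SimpleGraph.Walk.support_concat, List.mem_append] at hz3
            rcases hz3 with hz4 | hz4
            · exact Set.mem_insert_of_mem _ (Set.mem_insert_of_mem _ (hqsup z hz4))
            · rw [List.mem_singleton] at hz4
              exact hz4 ▸ Set.mem_insert_of_mem _ (Set.mem_insert _ _)
        obtain ⟨pB, hpB, hpBsup, hpBlen⟩ := Nat.find_spec hBpne
        have hpBmin : ∀ m < Nat.find hBpne, ¬ ∃ p : G.Walk y x, p.IsPath ∧
            (∀ z ∈ p.support, z ∈ insert y (insert x Cb)) ∧ p.length = m :=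
          fun m hm => Nat.find_min hBpne hm
        -- lengths at least 2
        have hlenA : 2 ≤ pA.length := by
          rcases Nat.lt_or_ge pA.length 2 with h | h
          · interval_cases h2 : pA.length
            · exact absurd (SimpleGraph.Walk.eq_of_length_eq_zero h2) hxyne
            · exact absurd (adj_of_walk_length_one pA h2) hxy
          · exact h
        have hlenB : 2 ≤ pB.length := by
          rcases Nat.lt_or_ge pB.length 2 with h | h
          · interval_cases h2 : pB.length
            · exact absurd (SimpleGraph.Walk.eq_of_length_eq_zero h2).symm hxyne
            · exact absurd (adj_of_walk_length_one pB h2).symm hxy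
          · exact h
        -- interior support facts
        have hxtailA : x ∉ pA.support.tail := by
          have hnd := hpA.support_nodup
          rw [SimpleGraph.Walk.support_eq_cons] at hnd
          exact (List.nodup_cons.1 hnd).1
        have hytailB : y ∉ pB.support.tail := by
          have hnd := hpB.support_nodup
          rw [SimpleGraph.Walk.support_eq_cons] at hnd
          exact (List.nodup_cons.1 hnd).1
        have htailA : ∀ z ∈ pA.support.tail, z ∈ insert y Ca := by
          intro z hz
          have := hpAsup z (List.mem_of_mem_tail hz)
          rcases this with rfl | h
          · exact absurd hz hxtailA
          · exact h
        have htailB : ∀ z ∈ pB.support.tail, z ∈ insert x Cb := by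
          intro z hz
          have := hpBsup z (List.mem_of_mem_tail hz)
          rcases this with rfl | h
          · exact absurd hz hytailB
          · exact h
        -- the cycle
        set c : G.Walk x x := pA.append pB with hc
        have hcsup : c.support = pA.support ++ pB.support.tail :=
          SimpleGraph.Walk.support_append pA pB
        have hcsuptail : c.support.tail = pA.support.tail ++ pB.support.tail := by
          rw [hcsup, SimpleGraph.Walk.support_eq_cons pA]
          rfl
        have hctailnodup : c.support.tail.Nodup := by
          rw [hcsuptail]
          refine List.Nodup.append ?_ ?_ ?_
          · have := hpA.support_nodup
            rw [SimpleGraph.Walk.support_eq_cons pA] at this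
            exact (List.nodup_cons.1 this).2
          · have := hpB.support_nodup
            rw [SimpleGraph.Walk.support_eq_cons pB] at this
            exact (List.nodup_cons.1 this).2
          · intro z hz1 hz2
            rcases htailA z hz1 with rfl | h1
            · rcases htailB z hz2 with h | h2
              · exact hxyne h.symm
              · exact hyCb h2
            · rcases htailB z hz2 with rfl | h2
              · exact hxCa h1
              · exact hdisj z h1 h2
        have hedgesA : ∀ e ∈ pA.edges, ∀ z, z ∈ e → z ∈ insert x (insert y Ca) := by
          intro e he z hz
          induction e with
          | _ e1 e2 =>
            rcases Sym2.mem_iff.1 hz with rfl | rfl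
            · exact hpAsup z (pA.fst_mem_support_of_mem_edges he)
            · exact hpAsup z (pA.snd_mem_support_of_mem_edges he)
        have hcedges : c.edges = pA.edges ++ pB.edges := SimpleGraph.Walk.edges_append pA pB
        have hctrail : c.IsTrail := by
          constructor
          rw [hcedges]
          refine List.Nodup.append hpA.edges_nodup hpB.edges_nodup ?_
          intro e he1 he2
          induction e with
          | _ e1 e2 =>
            have h1 : e1 ∈ pA.support := pA.fst_mem_support_of_mem_edges he1
            have h2 : e2 ∈ pA.support := pA.snd_mem_support_of_mem_edges he1
            have h1' : e1 ∈ pB.support := pB.fst_mem_support_of_mem_edges he2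
            have h2' : e2 ∈ pB.support := pB.snd_mem_support_of_mem_edges he2
            have hadj : G.Adj e1 e2 := pA.adj_of_mem_edges he1
            have hcl : ∀ z, z ∈ pA.support → z ∈ pB.support → z = x ∨ z = y := by
              intro z hzA hzB
              rcases hpAsup z hzA with rfl | rfl | hA
              · exact Or.inl rfl
              · exact Or.inr rfl
              · rcases hpBsup z hzB with rfl | rfl | hB
                · exact Or.inr rfl
                · exact Or.inl rfl
                · exact absurd hB (fun h => hdisj z hA h)
            rcases hcl e1 h1 h1' with rfl | rfl
            · rcases hcl e2 h2 h2' with rfl | rfl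
              · exact hadj.ne rfl
              · exact hxy hadj
            · rcases hcl e2 h2 h2' with rfl | rfl
              · exact hxy hadj.symm
              · exact hadj.ne rfl
        have hclen : c.length = pA.length + pB.length := SimpleGraph.Walk.length_append pA pB
        have hcnenil : c ≠ SimpleGraph.Walk.nil := by
          intro h
          have := congrArg SimpleGraph.Walk.length h
          rw [hclen] at this
          simp only [SimpleGraph.Walk.length_nil] at this
          omega
        have hccycle : c.IsCycle := (SimpleGraph.Walk.isCycle_def c).2
          ⟨hctrail, hcnenil, hctailnodup⟩
        obtain ⟨c1, hc1, c2, hc2, hadj12, hnedge⟩ := hch x c hccycle (by omega)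
        -- contradiction helpers
        have contraA : c1 ∈ pA.support → c2 ∈ pA.support → False := by
          intro h1 h2
          have hne : s(c1, c2) ∉ pA.edges := by
            intro h
            exact hnedge (by rw [hcedges]; exact List.mem_append_left _ h)
          obtain ⟨q, hq1, hq2⟩ := shortcut pA hpA h1 h2 hadj12 hne
          refine hpAmin q.toPath.1.length ?_ ⟨q.toPath.1, q.toPath.2, ?_, rfl⟩
          · calc (q.toPath.1).length ≤ q.length := (SimpleGraph.Walk.length_bypass_le q)
              _ < pA.length := hq1
              _ = Nat.find hApne := hpAlen
          · intro z hz
            exact hpAsup z (hq2 z (SimpleGraph.Walk.support_toPath_subset q hz))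
        have contraB : c1 ∈ pB.support → c2 ∈ pB.support → False := by
          intro h1 h2
          have hne : s(c1, c2) ∉ pB.edges := by
            intro h
            exact hnedge (by rw [hcedges]; exact List.mem_append_right _ h)
          obtain ⟨q, hq1, hq2⟩ := shortcut pB hpB h1 h2 hadj12 hne
          refine hpBmin q.toPath.1.length ?_ ⟨q.toPath.1, q.toPath.2, ?_, rfl⟩
          · calc (q.toPath.1).length ≤ q.length := (SimpleGraph.Walk.length_bypass_le q)
              _ < pB.length := hq1
              _ = Nat.find hBpne := hpBlen
          · intro z hz
            exact hpBsup z (hq2 z (SimpleGraph.Walk.support_toPath_subset q hz))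
        -- classification
        have hclassify : ∀ z ∈ c.support, z ∈ pA.support ∨ (z ∈ Cb ∧ z ∈ pB.support) := by
          intro z hz
          rcases (SimpleGraph.Walk.mem_support_append_iff pA pB).1 hz with h | h
          · exact Or.inl h
          · rcases hpBsup z h with rfl | rfl | hB
            · exact Or.inl pA.end_mem_support
            · exact Or.inl pA.start_mem_support
            · exact Or.inr ⟨hB, h⟩
        have hsubclass : ∀ z ∈ pA.support, z = x ∨ z = y ∨ z ∈ Ca := fun z hz => hpAsup z hz
        have hxinB : x ∈ pB.support := pB.end_mem_support
        have hyinB : y ∈ pB.support := pB.start_mem_support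
        rcases hclassify c1 hc1 with h1 | ⟨h1b, h1B⟩
        · rcases hclassify c2 hc2 with h2 | ⟨h2b, h2B⟩
          · exact contraA h1 h2
          · -- c1 ∈ pA.support, c2 ∈ Cb
            rcases hsubclass c1 h1 with rfl | rfl | h1a
            · exact contraB hxinB h2B
            · exact contraB hyinB h2B
            · exact hdisj c2 (reachIn_adj h1a hadj12 (hCbW h2b)) h2b
        · rcases hclassify c2 hc2 with h2 | ⟨h2b, h2B⟩
          · rcases hsubclass c2 h2 with rfl | rfl | h2a
            · exact contraB h1B hxinB
            · exact contraB h1B hyinB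
            · exact hdisj c1 (reachIn_adj h2a hadj12.symm (hCbW h1b)) h1b
          · exact contraB h1B h2B
      -- recurse into the two sides
      have hside : ∀ (c d : α) (Cc : Set α), c ∈ Cc → Cc = ReachIn G (W \ S) c →
          d ∈ W → d ∉ Cc → d ∉ S →
          ∃ v ∈ Cc, SimplIn G W v := by
        intro c d Cc hcC hCcdef hdW hdC hdS
        have hCcW : Cc ⊆ W \ S := hCcdef ▸ reachIn_subset
        set Wc := Cc ∪ S with hWc
        have hWcW : Wc ⊆ W := Set.union_subset (fun z hz => (hCcW hz).1) hSW
        have hWcne : Wc.Nonempty := ⟨c, Or.inl hcC⟩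
        have hbneW : ∃ w ∈ W, w ∉ Wc := by
          refine ⟨d, hdW, ?_⟩
          rintro (h | h)
          · exact hdC h
          · exact hdS h
        have hWclt : Wc.ncard < n := by
          obtain ⟨w, hw1, hw2⟩ := hbneW
          rw [← hWcard]
          exact Set.ncard_lt_ncard ⟨hWcW, fun hsub => hw2 (hsub hw1)⟩ (Set.toFinite W)
        have hnbrWc : ∀ v ∈ Cc, ∀ z ∈ W, G.Adj v z → z ∈ Wc := by
          intro v hv z hzW hadj
          by_cases hzS : z ∈ S
          · exact Or.inr hzS
          · left
            rw [hCcdef] at hv ⊢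
            exact reachIn_adj hv hadj ⟨hzW, hzS⟩
        have hlift : ∀ v ∈ Cc, SimplIn G Wc v → SimplIn G W v := by
          intro v hv hsimp
          refine ⟨hWcW hsimp.1, ?_⟩
          intro z1 hz1 z2 hz2 had1 had2 hne
          exact hsimp.2 z1 (hnbrWc v hv z1 hz1 had1) z2 (hnbrWc v hv z2 hz2 had2) had1 had2 hne
        rcases ih Wc.ncard hWclt Wc rfl hWcne with hc | ⟨u1, u2, hu1, hu2, hune, hunadj, hs1, hs2⟩
        · -- complete : c itself is simplicial in Wc
          refine ⟨c, hcC, hlift c hcC ⟨Or.inl hcC, ?_⟩⟩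
          intro z1 hz1 z2 hz2 _ _ hne
          exact hc z1 hz1 z2 hz2 hne
        · -- at least one of u1, u2 is outside S
          have : u1 ∈ Cc ∨ u2 ∈ Cc := by
            by_contra hcon
            push_neg at hcon
            have h1S : u1 ∈ S := by
              rcases hu1 with h | h
              · exact absurd h hcon.1
              · exact h
            have h2S : u2 ∈ S := by
              rcases hu2 with h | h
              · exact absurd h hcon.2
              · exact h
            exact hunadj (hSclique u1 h1S u2 h2S hune)
          rcases this with h | h
          · exact ⟨u1, h, hlift u1 h hs1⟩
          · exact ⟨u2, h, hlift u2 h hs2⟩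
      have hanCb : a ∉ Cb := fun h => hbnCa (reachIn_symm h)
      obtain ⟨va, hvaCa, hvaS⟩ := hside a b Ca haCa rfl hbW hbnCa hbS
      obtain ⟨vb, hvbCb, hvbS⟩ := hside b a Cb hbCb rfl haW hanCb haS
      refine ⟨va, vb, hvaS.1, hvbS.1, ?_, ?_, hvaS, hvbS⟩
      · rintro rfl
        exact hdisj va hvaCa hvbCb
      · intro hadj
        exact hdisj vb (reachIn_adj hvaCa hadj (hCbW hvbCb)) hvbCb

theorem exists_simplicial (hch : Chordal G) (W : Set α) (hW : W.Nonempty) :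
    ∃ v ∈ W, SimplIn G W v := by
  rcases dirac_rec hch W.ncard W rfl hW with h | ⟨va, _, hva, _, _, _, hsa, _⟩
  · obtain ⟨w, hw⟩ := hW
    exact ⟨w, hw, ⟨hw, fun x hx y hy _ _ hne => h x hx y hy hne⟩⟩
  · exact ⟨va, hva, hsa⟩

end Dirac

section Iter

variable {β : Type*}

lemma iter_fixed {f : β → β} {x : β} (h : f x = x) : ∀ n, f^[n] x = x := by
  intro n
  induction n with
  | zero => rfl
  | succ m ih => rw [Function.iterate_succ_apply, h, ih]

lemma iter_agree {P : β → Prop} {f f' : β → β} (hcl : ∀ x, P x → P (f x))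
    (hag : ∀ x, P x → f' x = f x) : ∀ (n : ℕ) (x), P x → f'^[n] x = f^[n] x := by
  intro n
  induction n with
  | zero => intro x _; rfl
  | succ m ih =>
    intro x hx
    rw [Function.iterate_succ_apply, Function.iterate_succ_apply, hag x hx]
    exact ih (f x) (hcl x hx)

lemma iter_mem {P : β → Prop} {f : β → β} (hcl : ∀ x, P x → P (f x)) :
    ∀ (n : ℕ) (x), P x → P (f^[n] x) := by
  intro n
  induction n with
  | zero => intro x hx; exact hx
  | succ m ih => intro x hx; rw [Function.iterate_succ_apply]; exact ih (f x) (hcl x hx)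

lemma iter_conj {g f : β → β} (hg : ∀ x, g (g x) = x) :
    ∀ (n : ℕ) (x), (g ∘ f ∘ g)^[n] x = g (f^[n] (g x)) := by
  intro n
  induction n with
  | zero => intro x; exact (hg x).symm
  | succ m ih =>
    intro x
    rw [Function.iterate_succ_apply, Function.iterate_succ_apply]
    show (g ∘ f ∘ g)^[m] (g (f (g x))) = _
    rw [ih (g (f (g x))), hg (f (g x))]

lemma anc_conj {g f : β → β} (hg : ∀ x, g (g x) = x) {a b : β} :
    Anc (g ∘ f ∘ g) a b ↔ Anc f (g a) (g b) := by
  constructor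
  · rintro ⟨n, hn⟩
    refine ⟨n, ?_⟩
    rw [iter_conj hg n b] at hn
    rw [← hn, hg]
  · rintro ⟨n, hn⟩
    refine ⟨n, ?_⟩
    rw [iter_conj hg n b, hn]
    exact hg a

lemma anc_agree {P : β → Prop} {f f' : β → β} (hcl : ∀ x, P x → P (f x))
    (hag : ∀ x, P x → f' x = f x) {a b : β} (hb : P b) :
    Anc f' a b ↔ Anc f a b := by
  constructor
  · rintro ⟨n, hn⟩; exact ⟨n, by rwa [iter_agree hcl hag n b hb] at hn⟩
  · rintro ⟨n, hn⟩; exact ⟨n, by rwa [iter_agree hcl hag n b hb]⟩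

end Iter

section MCWsec

variable {α : Type*} [Fintype α] {G : SimpleGraph α}

/-- maximal cliques of the induced subgraph on `W` -/
def MCW (G : SimpleGraph α) (W K : Set α) : Prop :=
  K ⊆ W ∧ G.IsClique K ∧ ∀ K', G.IsClique K' → K' ⊆ W → K ⊆ K' → K' = K

lemma exists_max_ext (W K : Set α) (hKW : K ⊆ W) (hK : G.IsClique K) :
    ∃ L, MCW G W L ∧ K ⊆ L := by
  classical
  set P : ℕ → Prop := fun m => ∃ L : Set α, K ⊆ L ∧ L ⊆ W ∧ G.IsClique L ∧ L.ncard = m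
    with hP
  have hP0 : P K.ncard := ⟨K, le_refl _, hKW, hK, rfl⟩
  have hbound : ∀ m, P m → m ≤ Fintype.card α := by
    rintro m ⟨L, _, _, _, hL⟩
    rw [← hL]
    calc L.ncard ≤ (Set.univ : Set α).ncard :=
          Set.ncard_le_ncard (Set.subset_univ L) (Set.toFinite _)
      _ = Fintype.card α := by rw [Set.ncard_univ, Nat.card_eq_fintype_card]
  have hfg : P (Nat.findGreatest P (Fintype.card α)) :=
    Nat.findGreatest_spec (hbound _ hP0) hP0
  obtain ⟨L, hKL, hLW, hLclique, hLcard⟩ := hfg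
  refine ⟨L, ⟨hLW, hLclique, ?_⟩, hKL⟩
  intro K' hK' hK'W hLK'
  by_contra hne
  have hss : L ⊂ K' := ⟨hLK', fun h => hne (le_antisymm h hLK')⟩
  have hlt : L.ncard < K'.ncard := Set.ncard_lt_ncard hss (Set.toFinite _)
  have hPK' : P K'.ncard := ⟨K', hKL.trans hLK', hK'W, hK', rfl⟩
  exact Nat.findGreatest_is_greatest (by omega) (hbound _ hPK') hPK'
  
end MCWsec

section CTrec

variable {α : Type*} [Fintype α] {G : SimpleGraph α}

theorem cliquetree_rec (hch : Chordal G) :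
    ∀ (n : ℕ) (W : Set α), W.ncard = n → ∀ rt, MCW G W rt →
      ∃ (par : Set α → Set α) (dep : Set α → ℕ),
        par rt = rt ∧ dep rt = 0 ∧
        (∀ K, MCW G W K → K ≠ rt → MCW G W (par K) ∧ dep K = dep (par K) + 1) ∧
        (∀ K, MCW G W K → K ≠ rt → ∀ x ∈ K,
          (∃ K', MCW G W K' ∧ x ∈ K' ∧ ¬ Anc par K K') → x ∈ par K) := by
  intro n
  induction n using Nat.strong_induction_on with
  | _ n ih =>
    intro W hWcard rt hrt
    by_cases hWe : W = ∅
    · subst hWe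
      have hrtonly : ∀ K, MCW G ∅ K → K = rt := by
        intro K hK
        have h1 : K = ∅ := Set.subset_empty_iff.1 hK.1
        have h2 : rt = ∅ := Set.subset_empty_iff.1 hrt.1
        rw [h1, h2]
      exact ⟨id, fun _ => 0, rfl, rfl,
        fun K hK hKrt => absurd (hrtonly K hK) hKrt,
        fun K hK hKrt => absurd (hrtonly K hK) hKrt⟩
    · have hWne := Set.nonempty_iff_ne_empty.2 hWe
      obtain ⟨v, hvW, hvsimp⟩ := exists_simplicial hch W hWne
      classical
      set N : Set α := {x | x ∈ W ∧ G.Adj v x} with hNdef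
      set Kv : Set α := insert v N with hKvdef
      set W' : Set α := W \ {v} with hW'def
      have hvN : v ∉ N := fun h => G.loopless.irrefl v h.2
      have hNW' : N ⊆ W' := fun x hx => ⟨hx.1, fun h => G.loopless.irrefl v (h ▸ hx.2 : G.Adj v v)⟩
      have hNKv : N ⊆ Kv := Set.subset_insert v N
      have hvKv : v ∈ Kv := Set.mem_insert v N
      have hKvN : Kv ≠ N := fun h => hvN (h ▸ hvKv)
      have hKvclique : G.IsClique Kv := by
        intro x hx y hy hne
        rcases hx with rfl | hx
        · rcases hy with rfl | hy
          · exact absurd rfl hne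
          · exact hy.2
        · rcases hy with rfl | hy
          · exact hx.2.symm
          · exact hvsimp.2 x hx.1 y hy.1 hx.2 hy.2 hne
      have hNclique : G.IsClique N := hKvclique.subset hNKv
      have hKvW : Kv ⊆ W := by
        intro x hx
        rcases hx with rfl | hx
        · exact hvW
        · exact hx.1
      have F1 : MCW G W Kv := by
        refine ⟨hKvW, hKvclique, ?_⟩
        intro K' hK' hK'W hsub
        by_contra hne
        obtain ⟨z, hzK, hzKv⟩ := Set.exists_of_ssubset ⟨hsub, fun h => hne (le_antisymm h hsub)⟩
        have hzv : z ≠ v := fun h => hzKv (h ▸ hvKv)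
        have : G.Adj v z := hK' (hsub hvKv) hzK (Ne.symm hzv)
        exact hzKv (Set.mem_insert_of_mem _ ⟨hK'W hzK, this⟩)
      have F2 : ∀ K, MCW G W K → v ∈ K → K = Kv := by
        intro K hK hvK
        have hsub : K ⊆ Kv := by
          intro z hz
          by_cases hzv : z = v
          · exact hzv ▸ hvKv
          · exact Set.mem_insert_of_mem _ ⟨hK.1 hz, hK.2.1 hvK hz (Ne.symm hzv)⟩
        exact (hK.2.2 Kv hKvclique hKvW hsub).symm
      have F3 : ∀ K, MCW G W K → K ≠ Kv → MCW G W' K := by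
        intro K hK hne
        have hvK : v ∉ K := fun h => hne (F2 K hK h)
        refine ⟨fun z hz => ⟨hK.1 hz, fun h => hvK (h ▸ hz)⟩, hK.2.1, ?_⟩
        intro K' hK' hK'W hsub
        exact hK.2.2 K' hK' (fun z hz => (hK'W hz).1) hsub
      have F4 : ∀ K, MCW G W' K → MCW G W K ∨ K = N := by
        intro K hK
        obtain ⟨L, hL, hKL⟩ := exists_max_ext W K (fun z hz => (hK.1 hz).1) hK.2.1
        by_cases hLK : L = K
        · exact Or.inl (hLK ▸ hL)
        · right
          have hvL : v ∈ L := by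
            by_contra hvL
            exact hLK (hK.2.2 L hL.2.1 (fun z hz => ⟨hL.1 hz, fun h => hvL (h ▸ hz)⟩) hKL)
          have hLKv : L = Kv := F2 L hL hvL
          have hKN : K ⊆ N := by
            intro z hz
            have hzv : z ≠ v := fun h => (hK.1 hz).2 (h ▸ rfl)
            rcases hLKv ▸ hKL hz with h | h
            · exact absurd h hzv
            · exact h
          exact (hK.2.2 N hNclique hNW' hKN).symm
      have hW'lt : W'.ncard < n := by
        rw [← hWcard]
        exact Set.ncard_diff_singleton_lt_of_mem hvW (Set.toFinite W)
      have hKvnW' : ¬ MCW G W' Kv := fun h => (h.1 hvKv).2 rfl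
      by_cases hNmax : MCW G W' N
      · -- Case 1 : N is itself a maximal clique of W'
        have hNnotW : ¬ MCW G W N := fun h => hKvN (h.2.2 Kv hKvclique hKvW hNKv)
        have CL1 : ∀ K, MCW G W K ↔ (K = Kv ∨ (MCW G W' K ∧ K ≠ N)) := by
          intro K
          constructor
          · intro hK
            by_cases hKKv : K = Kv
            · exact Or.inl hKKv
            · refine Or.inr ⟨F3 K hK hKKv, ?_⟩
              rintro rfl
              exact hNnotW hK
          · rintro (rfl | ⟨hK, hKN⟩)
            · exact F1
            · rcases F4 K hK with h | h
              · exact h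
              · exact absurd h hKN
        set g : Set α → Set α := fun X => if X = N then Kv else if X = Kv then N else X
          with hg
        have hgN : g N = Kv := by simp [hg]
        have hgKv : g Kv = N := by simp [hg, hKvN]
        have hgother : ∀ X, X ≠ N → X ≠ Kv → g X = X := by
          intro X h1 h2
          simp [hg, h1, h2]
        have hgg : ∀ X, g (g X) = X := by
          intro X
          by_cases h1 : X = N
          · rw [h1, hgN, hgKv]
          · by_cases h2 : X = Kv
            · rw [h2, hgKv, hgN]
            · rw [hgother X h1 h2, hgother X h1 h2]
        have hnode : ∀ K, MCW G W K ↔ MCW G W' (g K) := by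
          intro K
          by_cases h1 : K = Kv
          · rw [h1, hgKv]
            exact ⟨fun _ => hNmax, fun _ => F1⟩
          · by_cases h2 : K = N
            · rw [h2, hgN]
              exact ⟨fun h => absurd h hNnotW, fun h => absurd h hKvnW'⟩
            · rw [hgother K h2 h1, CL1]
              constructor
              · rintro (h | ⟨h, _⟩)
                · exact absurd h h1
                · exact h
              · intro h
                exact Or.inr ⟨h, h2⟩
        have hrt' : MCW G W' (g rt) := (hnode rt).1 hrt
        obtain ⟨par', dep', hpr', hdr', hax', hjt'⟩ := ih W'.ncard hW'lt W' rfl (g rt) hrt'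
        have hmem : ∀ x, x ≠ v → ∀ L, MCW G W L → (x ∈ L ↔ x ∈ g L) := by
          intro x hxv L hL
          by_cases h1 : L = Kv
          · rw [h1, hgKv]
            constructor
            · intro h
              rcases h with h | h
              · exact absurd h hxv
              · exact h
            · exact fun h => hNKv h
          · have h2 : L ≠ N := fun h => hNnotW (h ▸ hL)
            rw [hgother L h2 h1]
        have hparnode : ∀ K, MCW G W K → K ≠ rt → MCW G W (g (par' (g K))) := by
          intro K hK hKrt
          have h1 : MCW G W' (g K) := (hnode K).1 hK
          have h2 : g K ≠ g rt := fun h => hKrt (by rw [← hgg K, h, hgg])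
          have := (hax' (g K) h1 h2).1
          rw [hnode (g (par' (g K))), hgg]
          exact this
        refine ⟨g ∘ par' ∘ g, dep' ∘ g, ?_, ?_, ?_, ?_⟩
        · show g (par' (g rt)) = rt
          rw [hpr', hgg]
        · exact hdr'
        · intro K hK hKrt
          have h1 : MCW G W' (g K) := (hnode K).1 hK
          have h2 : g K ≠ g rt := fun h => hKrt (by rw [← hgg K, h, hgg])
          obtain ⟨ha, hb⟩ := hax' (g K) h1 h2
          refine ⟨hparnode K hK hKrt, ?_⟩
          show dep' (g K) = dep' (g (g (par' (g K)))) + 1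
          rw [hgg]
          exact hb
        · rintro K hK hKrt x hxK ⟨K', hK', hxK', hnanc⟩
          by_cases hxv : x = v
          · exfalso
            apply hnanc
            have hKKv : K = Kv := F2 K hK (hxv ▸ hxK)
            have hK'Kv : K' = Kv := F2 K' hK' (hxv ▸ hxK')
            rw [hKKv, hK'Kv]
            exact Conf.anc_refl _
          · have hnanc' : ¬ Anc par' (g K) (g K') := fun h => hnanc ((anc_conj hgg).2 h)
            have h1 : MCW G W' (g K) := (hnode K).1 hK
            have h2 : g K ≠ g rt := fun h => hKrt (by rw [← hgg K, h, hgg])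
            have hres := hjt' (g K) h1 h2 x ((hmem x hxv K hK).1 hxK)
              ⟨g K', (hnode K').1 hK', (hmem x hxv K' hK').1 hxK', hnanc'⟩
            show x ∈ g (par' (g K))
            have hPK : MCW G W (g (par' (g K))) := hparnode K hK hKrt
            have := (hmem x hxv _ hPK).2
            rw [hgg] at this
            exact this hres
      · -- Case 2 : N is not maximal in W'; extend it to M
        obtain ⟨M, hM, hNM⟩ := exists_max_ext W' N hNW' hNclique
        have hMKv : M ≠ Kv := fun h => (hM.1 (h ▸ hvKv)).2 rfl
        have CL2 : ∀ K, MCW G W K ↔ (K = Kv ∨ MCW G W' K) := by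
          intro K
          constructor
          · intro hK
            by_cases h : K = Kv
            · exact Or.inl h
            · exact Or.inr (F3 K hK h)
          · rintro (rfl | h)
            · exact F1
            · rcases F4 K h with h2 | rfl
              · exact h2
              · exact absurd h hNmax
        have hW'node_ne : ∀ K, MCW G W' K → K ≠ Kv := fun K h e => hKvnW' (e ▸ h)
        have hxnev : ∀ K, MCW G W' K → ∀ x ∈ K, x ≠ v := by
          intro K hK x hx e
          exact (hK.1 hx).2 (e ▸ rfl)
        have hmemN : ∀ x ∈ Kv, x ≠ v → x ∈ N := by
          intro x hx hxv
          rcases hx with h | h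
          · exact absurd h hxv
          · exact h
        by_cases hrtKv : rt = Kv
        · -- Subcase 2b : root is Kv ; root the smaller tree at M
          obtain ⟨par', dep', hpr', hdr', hax', hjt'⟩ := ih W'.ncard hW'lt W' rfl M hM
          set par : Set α → Set α :=
            fun K => if K = Kv then Kv else if K = M then Kv else par' K with hpardef
          set dep : Set α → ℕ := fun K => if K = Kv then 0 else dep' K + 1 with hdepdef
          have hparKv : par Kv = Kv := by simp [hpardef]
          have hparM : par M = Kv := by simp [hpardef, hMKv]
          have hparother : ∀ K, K ≠ Kv → K ≠ M → par K = par' K := by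
            intro K h1 h2
            simp [hpardef, h1, h2]
          have hcl' : ∀ K, MCW G W' K → MCW G W' (par' K) := by
            intro K hK
            by_cases h : K = M
            · rw [h, hpr']
              exact hM
            · exact (hax' K hK h).1
          have hMroot : ∀ m (b), MCW G W' b → dep' b = m → Anc par' M b := by
            intro m
            induction m using Nat.strong_induction_on with
            | _ m ihm =>
              intro b hb hdep
              by_cases hbM : b = M
              · rw [hbM]
                exact Conf.anc_refl M
              · obtain ⟨h1, h2⟩ := hax' b hb hbM
                exact Conf.anc_trans (ihm (dep' (par' b)) (by omega) _ h1 rfl)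
                  (Conf.anc_parent b)
          have hancM_eq : ∀ a b, Anc par' a b → par' b = b → a = b := by
            rintro a b ⟨n, hn⟩ hfix
            rw [iter_fixed hfix n] at hn
            exact hn.symm
          have hfwd : ∀ (n : ℕ) (b), MCW G W' b → ∀ a, par^[n] b = a →
              Anc par' a b ∨ a = Kv := by
            intro n
            induction n with
            | zero =>
              intro b _ a ha
              exact Or.inl (ha ▸ Conf.anc_refl b)
            | succ m ihm =>
              intro b hb a ha
              rw [Function.iterate_succ_apply] at ha
              by_cases hbM : b = M
              · right
                rw [hbM, hparM, iter_fixed hparKv m] at ha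
                exact ha.symm
              · rw [hparother b (hW'node_ne b hb) hbM] at ha
                rcases ihm (par' b) (hcl' b hb) a ha with h | h
                · exact Or.inl (Conf.anc_trans h (Conf.anc_parent b))
                · exact Or.inr h
          have hbwd : ∀ (b), MCW G W' b → ∀ a, Anc par' a b → Anc par a b := by
            intro b hb a hanc
            have hex : ∃ m, par'^[m] b = a := hanc
            set m₀ := Nat.find hex with hm₀
            have hm₀spec : par'^[m₀] b = a := Nat.find_spec hex
            have hintermed : ∀ i < m₀, par'^[i] b ≠ M := by
              intro i hi he
              have : par'^[m₀] b = M := by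
                obtain ⟨j, hj⟩ : ∃ j, m₀ = j + i := ⟨m₀ - i, by omega⟩
                rw [hj, Function.iterate_add_apply, he, iter_fixed hpr' j]
              exact Nat.find_min hex hi (by rw [he, ← this, hm₀spec])
            have hstep : ∀ j ≤ m₀, par^[j] b = par'^[j] b := by
              intro j hj
              induction j with
              | zero => rfl
              | succ i ihi =>
                rw [Function.iterate_succ_apply', Function.iterate_succ_apply',
                  ihi (by omega)]
                have hnode := iter_mem hcl' i b hb
                exact hparother _ (hW'node_ne _ hnode) (hintermed i (by omega))
            exact ⟨m₀, by rw [hstep m₀ le_rfl, hm₀spec]⟩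
          refine ⟨par, dep, ?_, ?_, ?_, ?_⟩
          · rw [hrtKv]
            exact hparKv
          · rw [hrtKv]
            simp [hdepdef]
          · intro K hK hKrt
            have hKW' : MCW G W' K := by
              rcases (CL2 K).1 hK with h | h
              · exact absurd (h.trans hrtKv.symm) hKrt
              · exact h
            have hKne : K ≠ Kv := hW'node_ne K hKW'
            by_cases hKM : K = M
            · constructor
              · rw [hKM, hparM]
                exact F1
              · rw [hKM, hparM]
                simp only [hdepdef, if_neg hMKv, if_pos rfl]
                rw [hdr']
            · constructor
              · rw [hparother K hKne hKM]
                exact (CL2 _).2 (Or.inr (hax' K hKW' hKM).1)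
              · rw [hparother K hKne hKM]
                have h2 := (hax' K hKW' hKM).2
                have hp'ne : par' K ≠ Kv := hW'node_ne _ (hax' K hKW' hKM).1
                simp only [hdepdef, if_neg hKne, if_neg hp'ne]
                omega
          · rintro K hK hKrt x hxK ⟨K', hK', hxK', hnanc⟩
            have hKW' : MCW G W' K := by
              rcases (CL2 K).1 hK with h | h
              · exact absurd (h.trans hrtKv.symm) hKrt
              · exact h
            have hKne : K ≠ Kv := hW'node_ne K hKW'
            by_cases hKM : K = M
            · rw [hKM, hparM]
              rcases (CL2 K').1 hK' with rfl | hK'W'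
              · exact hxK'
              · exfalso
                apply hnanc
                rw [hKM]
                exact hbwd K' hK'W' M (hMroot (dep' K') K' hK'W' rfl)
            · rw [hparother K hKne hKM]
              rcases (CL2 K').1 hK' with rfl | hK'W'
              · have hxv : x ≠ v := hxnev K hKW' x hxK
                have hxM : x ∈ M := hNM (hmemN x hxK' hxv)
                have hnM : ¬ Anc par' K M := by
                  intro h
                  exact hKM (hancM_eq K M h hpr')
                exact hjt' K hKW' hKM x hxK ⟨M, hM, hxM, hnM⟩
              · have hnanc' : ¬ Anc par' K K' := fun h => hnanc (hbwd K' hK'W' K h)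
                exact hjt' K hKW' hKM x hxK ⟨K', hK'W', hxK', hnanc'⟩
        · -- Subcase 2a : root is not Kv
          have hrtW' : MCW G W' rt := F3 rt hrt hrtKv
          obtain ⟨par', dep', hpr', hdr', hax', hjt'⟩ := ih W'.ncard hW'lt W' rfl rt hrtW'
          set par : Set α → Set α := fun K => if K = Kv then M else par' K with hpardef
          set dep : Set α → ℕ := fun K => if K = Kv then dep' M + 1 else dep' K with hdepdef
          have hparKv : par Kv = M := by simp [hpardef]
          have hparother : ∀ K, K ≠ Kv → par K = par' K := by
            intro K h1
            simp [hpardef, h1]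
          have hcl' : ∀ K, MCW G W' K → MCW G W' (par' K) := by
            intro K hK
            by_cases h : K = rt
            · rw [h, hpr']
              exact hrtW'
            · exact (hax' K hK h).1
          have hagree : ∀ K, MCW G W' K → par K = par' K :=
            fun K h => hparother K (hW'node_ne K h)
          have hanc_iff : ∀ a b, MCW G W' b → (Anc par a b ↔ Anc par' a b) :=
            fun a b hb => anc_agree hcl' hagree hb
          have hancKv : ∀ a, Anc par a Kv ↔ (a = Kv ∨ Anc par' a M) := by
            intro a
            constructor
            · rintro ⟨n, hn⟩
              cases n with
              | zero => exact Or.inl hn.symm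
              | succ m =>
                right
                rw [Function.iterate_succ_apply, hparKv] at hn
                rw [iter_agree hcl' hagree m M hM] at hn
                exact ⟨m, hn⟩
            · rintro (rfl | ⟨m, hm⟩)
              · exact Conf.anc_refl _
              · refine ⟨m + 1, ?_⟩
                rw [Function.iterate_succ_apply, hparKv, iter_agree hcl' hagree m M hM]
                exact hm
          refine ⟨par, dep, ?_, ?_, ?_, ?_⟩
          · rw [hparother rt hrtKv]
            exact hpr'
          · simp only [hdepdef, if_neg hrtKv]
            exact hdr'
          · intro K hK hKrt
            by_cases hKKv : K = Kv
            · constructor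
              · rw [hKKv, hparKv]
                exact (CL2 M).2 (Or.inr hM)
              · rw [hKKv, hparKv]
                simp only [hdepdef, if_pos rfl, if_neg hMKv]
            · have hKW' : MCW G W' K := by
                rcases (CL2 K).1 hK with h | h
                · exact absurd h hKKv
                · exact h
              obtain ⟨h1, h2⟩ := hax' K hKW' hKrt
              constructor
              · rw [hparother K hKKv]
                exact (CL2 _).2 (Or.inr h1)
              · rw [hparother K hKKv]
                simp only [hdepdef, if_neg hKKv, if_neg (hW'node_ne _ h1)]
                exact h2
          · rintro K hK hKrt x hxK ⟨K', hK', hxK', hnanc⟩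
            by_cases hKKv : K = Kv
            · rw [hKKv, hparKv]
              by_cases hxv : x = v
              · exfalso
                apply hnanc
                have hK'Kv : K' = Kv := F2 K' hK' (hxv ▸ hxK')
                rw [hKKv, hK'Kv]
                exact Conf.anc_refl _
              · exact hNM (hmemN x (hKKv ▸ hxK) hxv)
            · have hKW' : MCW G W' K := by
                rcases (CL2 K).1 hK with h | h
                · exact absurd h hKKv
                · exact h
              rw [hparother K hKKv]
              rcases (CL2 K').1 hK' with rfl | hK'W'
              · have hxv : x ≠ v := hxnev K hKW' x hxK
                have hxM : x ∈ M := hNM (hmemN x hxK' hxv)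
                have hnM : ¬ Anc par' K M := by
                  intro h
                  apply hnanc
                  rw [hancKv K]
                  exact Or.inr h
                exact hjt' K hKW' hKrt x hxK ⟨M, hM, hxM, hnM⟩
              · have hnanc' : ¬ Anc par' K K' :=
                  fun h => hnanc ((hanc_iff K K' hK'W').2 h)
                exact hjt' K hKW' hKrt x hxK ⟨K', hK'W', hxK', hnanc'⟩

end CTrec

section Lift

variable {α : Type*} [Fintype α] {G : SimpleGraph α}

lemma mcw_univ_iff {K : Set α} : MCW G Set.univ K ↔ IsMaxClique G K := by
  constructor
  · rintro ⟨_, hc, hm⟩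
    exact ⟨hc, fun K' h1 h2 => hm K' h1 (Set.subset_univ _) h2⟩
  · rintro ⟨hc, hm⟩
    exact ⟨Set.subset_univ _, hc, fun K' h1 _ h2 => hm K' h1 h2⟩

lemma exists_mem_maxclique (v : α) : ∃ K : MaxCliques G, v ∈ K.1 := by
  obtain ⟨L, hL, hvL⟩ := exists_max_ext (G := G) Set.univ {v} (Set.subset_univ _)
    (by simp [SimpleGraph.isClique_iff, Set.pairwise_singleton])
  exact ⟨⟨L, mcw_univ_iff.1 hL⟩, hvL (Set.mem_singleton v)⟩

lemma exists_ctree (hch : Chordal G) (root : MaxCliques G) :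
    ∃ (par : MaxCliques G → MaxCliques G) (dep : MaxCliques G → ℕ),
      Conf par dep root ∧ IsJT par root (fun K : MaxCliques G => K.1) := by
  obtain ⟨par0, dep0, hpr, hdr, hax, hjt⟩ :=
    cliquetree_rec hch (Set.univ : Set α).ncard Set.univ rfl root.1
      (mcw_univ_iff.2 root.2)
  have hclo : ∀ K : MaxCliques G, IsMaxClique G (par0 K.1) := by
    intro K
    by_cases h : K.1 = root.1
    · rw [h, hpr]
      exact root.2
    · exact mcw_univ_iff.1 (hax K.1 (mcw_univ_iff.2 K.2) h).1
  set Par : MaxCliques G → MaxCliques G := fun K => ⟨par0 K.1, hclo K⟩ with hPar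
  have hiter : ∀ (n : ℕ) (K : MaxCliques G), (Par^[n] K).1 = par0^[n] K.1 := by
    intro n
    induction n with
    | zero => intro K; rfl
    | succ m ihm =>
      intro K
      rw [Function.iterate_succ_apply, Function.iterate_succ_apply]
      exact ihm (Par K)
  have hanc : ∀ a b : MaxCliques G, Anc Par a b ↔ Anc par0 a.1 b.1 := by
    intro a b
    constructor
    · rintro ⟨n, hn⟩
      exact ⟨n, by rw [← hiter n b, hn]⟩
    · rintro ⟨n, hn⟩
      exact ⟨n, Subtype.ext (by rw [hiter n b, hn])⟩
  have hroot_ne : ∀ i : MaxCliques G, i ≠ root → i.1 ≠ root.1 :=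
    fun i h e => h (Subtype.ext e)
  refine ⟨Par, fun K => dep0 K.1, ?_, ?_⟩
  · constructor
    · exact Subtype.ext hpr
    · exact hdr
    · intro i hi
      exact (hax i.1 (mcw_univ_iff.2 i.2) (hroot_ne i hi)).2
  · intro i hi x hxi ⟨k, hnk, hxk⟩
    refine hjt i.1 (mcw_univ_iff.2 i.2) (hroot_ne i hi) x hxi
      ⟨k.1, mcw_univ_iff.2 k.2, hxk, fun h => hnk ((hanc i k).2 h)⟩

end Lift

section MainSep

variable {α : Type*} [Fintype α] {G : SimpleGraph α}

lemma no_small_separator [Fintype (MaxCliques G)]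
    {par : MaxCliques G → MaxCliques G} {dep : MaxCliques G → ℕ} {root : MaxCliques G}
    (T : Conf par dep root) (hjt : IsJT par root (fun K : MaxCliques G => K.1))
    (hmin : ∀ (par2 : MaxCliques G → MaxCliques G) (dep2 : MaxCliques G → ℕ),
      Conf par2 dep2 root → IsJT par2 root (fun K : MaxCliques G => K.1) →
        (∑ x, dep x) ≤ ∑ x, dep2 x)
    {i j : MaxCliques G} (hi : i ≠ root) (hj : j ≠ root) (hpj : par j = par i)
    {S : Set α} (hS : IsMinSepWithin G (⋃ K ∈ {K : MaxCliques G | Anc par j K}, K.1) S) :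
    ¬ S ⊆ i.1 ∩ (par i).1 := by
  classical
  intro hsub
  obtain ⟨hSW, u₁, u₂, hune, hsep, hminS⟩ := hS
  obtain ⟨hu1W, hu2W, hu1S, hu2S, hnadj, hsepwalk⟩ := hsep
  set W : Set α := ⋃ K ∈ {K : MaxCliques G | Anc par j K}, K.1 with hWdef
  have hmemW : ∀ x, x ∈ W ↔ ∃ K : MaxCliques G, Anc par j K ∧ x ∈ K.1 := by
    intro x
    simp [hWdef, Set.mem_iUnion]
  have hdepj : dep j = dep (par i) + 1 := by rw [← hpj]; exact T.dep_par j hj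
  have hnjq : ¬ Anc par j (par i) := by
    intro h
    have := T.anc_dep_le h
    omega
  -- Step 1 : S ⊆ K_j
  have hSj : S ⊆ j.1 := by
    intro w hw
    obtain ⟨x, hancx, hwx⟩ := (hmemW w).1 (hSW hw)
    exact (jt_sep T hjt hwx hancx ((hsub hw).2) hnjq).1
  -- Step 2 : there is z ∈ K_j \ S
  have hzex : ∃ z, z ∈ j.1 ∧ z ∉ S := by
    by_contra hno
    push_neg at hno
    have hji : j.1 ⊆ i.1 := fun z hz => (hsub (hno z hz)).1
    have hij : i = j := Subtype.ext (j.2.2 i.1 i.2.1 hji)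
    have hjq : j.1 ⊆ (par i).1 := fun z hz => (hsub (hno z hz)).2
    have : par i = j := Subtype.ext (j.2.2 (par i).1 (par i).2.1 hjq)
    rw [this] at hdepj
    omega
  obtain ⟨z, hzj, hzS⟩ := hzex
  have hjW : ∀ x ∈ j.1, x ∈ W := fun x hx => (hmemW x).2 ⟨j, Conf.anc_refl j, hx⟩
  -- components
  set R : Set α := W \ S with hRdef
  set Cu : Set α := ReachIn G R u₁ with hCu
  set Cv : Set α := ReachIn G R u₂ with hCv
  have hCuR : Cu ⊆ R := reachIn_subset
  have hCvR : Cv ⊆ R := reachIn_subset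
  have hdisj : ∀ x, x ∈ Cu → x ∈ Cv → False := by
    intro x hx1 hx2
    have : u₂ ∈ Cu := reachIn_trans hx1 (reachIn_symm hx2)
    obtain ⟨p, hp⟩ := this
    obtain ⟨w, hw1, hw2⟩ := hsepwalk p (fun w hw => (hp w hw).1)
    exact (hp w hw1).2 hw2
  have hu1Cu : u₁ ∈ Cu := reachIn_self ⟨hu1W, hu1S⟩
  have hu2Cv : u₂ ∈ Cv := reachIn_self ⟨hu2W, hu2S⟩
  -- choose the component avoiding K_j
  obtain ⟨D, uD, huD, hDR, hDdisj, hDj⟩ :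
      ∃ (D : Set α) (uD : α), uD ∈ D ∧ D ⊆ R ∧ D = ReachIn G R uD ∧
        ∀ y ∈ D, y ∉ j.1 := by
    by_cases hzCu : z ∈ Cu
    · refine ⟨Cv, u₂, hu2Cv, hCvR, rfl, ?_⟩
      intro y hy hyj
      by_cases hyz : y = z
      · exact hdisj z hzCu (hyz ▸ hy)
      · have hadj : G.Adj y z := j.2.1 hyj hzj hyz
        have hzR : z ∈ R := ⟨hjW z hzj, hzS⟩
        exact hdisj z hzCu (reachIn_adj hy hadj hzR)
    · refine ⟨Cu, u₁, hu1Cu, hCuR, rfl, ?_⟩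
      intro y hy hyj
      by_cases hyz : y = z
      · exact hzCu (hyz ▸ hy)
      · have hadj : G.Adj y z := j.2.1 hyj hzj hyz
        have hzR : z ∈ R := ⟨hjW z hzj, hzS⟩
        exact hzCu (reachIn_adj hy hadj hzR)
  -- the cliques meeting D all lie in the subtree of j
  have hTDsub : ∀ k : MaxCliques G, ∀ d, d ∈ k.1 → d ∈ D → Anc par j k := by
    intro k d hdk hdD
    by_contra hnk
    obtain ⟨x, hancx, hdx⟩ := (hmemW d).1 (hDR hdD).1
    exact hDj d hdD (jt_sep T hjt hdx hancx hdk hnk).1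
  -- pick the minimum-depth clique meeting D
  have hTD : ∃ m, ∃ k : MaxCliques G, (∃ d, d ∈ k.1 ∧ d ∈ D) ∧ dep k = m := by
    obtain ⟨x, hancx, hdx⟩ := (hmemW uD).1 (hDR huD).1
    exact ⟨dep x, x, ⟨uD, hdx, huD⟩, rfl⟩
  obtain ⟨k₀, ⟨d₀, hd₀k, hd₀D⟩, hk₀dep⟩ := Nat.find_spec hTD
  have hk₀min : ∀ k : MaxCliques G, (∃ d, d ∈ k.1 ∧ d ∈ D) → dep k₀ ≤ dep k := by
    intro k hk
    by_contra hlt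
    exact Nat.find_min hTD (by omega) ⟨k, hk, rfl⟩
  have hanck₀ : Anc par j k₀ := hTDsub k₀ d₀ hd₀k hd₀D
  have hk₀j : k₀ ≠ j := by
    rintro rfl
    exact hDj d₀ hd₀D hd₀k
  have hk₀root : k₀ ≠ root := by
    rintro rfl
    exact hk₀j (T.anc_to_root hanck₀).symm
  have hdepk₀ : dep j < dep k₀ := T.anc_dep_lt hanck₀ (Ne.symm hk₀j)
  have hpark₀D : ∀ d ∈ (par k₀).1, d ∉ D := by
    intro d hd hdD
    have := hk₀min (par k₀) ⟨d, hd, hdD⟩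
    have := T.dep_par_lt hk₀root
    omega
  -- the separator of the edge (k₀, par k₀) is inside S
  have hSk₀ : k₀.1 ∩ (par k₀).1 ⊆ S := by
    rintro w ⟨hw1, hw2⟩
    have hwd : w ≠ d₀ := fun h => hpark₀D w hw2 (h ▸ hd₀D)
    have hadj : G.Adj w d₀ := k₀.2.1 hw1 hd₀k hwd
    by_contra hwS
    have hwW : w ∈ W := (hmemW w).2 ⟨k₀, hanck₀, hw1⟩
    have hwD : w ∈ D := by
      rw [hDdisj] at hd₀D ⊢
      exact reachIn_adj hd₀D hadj.symm ⟨hwW, hwS⟩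
    exact hpark₀D w hw2 hwD
  -- rehang k₀ below q := par i and contradict minimality
  have hnq : ¬ Anc par k₀ (par i) := by
    intro h
    have := T.anc_dep_le h
    omega
  have hqk : Anc par (par i) k₀ := by
    refine Conf.anc_trans ?_ hanck₀
    rw [← hpj]
    exact Conf.anc_parent j
  have hSq : k₀.1 ∩ (par k₀).1 ⊆ (par i).1 :=
    fun w hw => (hsub (hSk₀ hw)).2
  obtain ⟨par2, dep2, hT2, hjt2, hlt2, hle2⟩ :=
    rehang T hjt hk₀root hnq hqk (by omega) hSq
  have hsumlt : (∑ x, dep2 x) < ∑ x, dep x := by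
    refine Finset.sum_lt_sum (fun x _ => hle2 x) ⟨k₀, Finset.mem_univ k₀, hlt2⟩
  have := hmin par2 dep2 hT2 hjt2
  omega

end MainSep

end Stmt16Aux

open Stmt16Aux in
/-- Every connected chordal graph admits a clique-tree, rooted at an arbitrary
maximal clique, such that for every non-root clique `K_i` with parent
`K_{p(i)}` and separator `S_i = K_i ∩ K_{p(i)}`, and every child `K_j` of
`K_{p(i)}`, no minimal separator of the subgraph `G_j` induced by the union of
the maximal cliques in the subtree rooted at `K_j` is contained in `S_i`. -/
theorem stmt16 {α : Type*} [Fintype α] (G : SimpleGraph α)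
    (hconn : G.Connected) (hch : Chordal G) (root : MaxCliques G) :
    ∃ TG : SimpleGraph (MaxCliques G),
      TG.IsTree ∧
      (∀ v : α, (TG.induce {K : MaxCliques G | v ∈ K.1}).Connected) ∧
      ∃ parent : MaxCliques G → MaxCliques G,
        (∀ i, i ≠ root → TG.Adj i (parent i) ∧
          ∀ p : TG.Walk i root, p.IsPath → parent i ∈ p.support) ∧
        ∀ i, i ≠ root → ∀ j, j ≠ root → parent j = parent i →
          ∀ S : Set α,
            IsMinSepWithin G
              (⋃ K ∈ {K : MaxCliques G |
                  ∀ p : TG.Walk K root, p.IsPath → j ∈ p.support}, K.1) S →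
            ¬ S ⊆ i.1 ∩ (parent i).1 := by
  classical
  haveI : Fintype (MaxCliques G) := Fintype.ofFinite _
  obtain ⟨par0, dep0, hT0, hjt0⟩ := exists_ctree hch root
  have hPne : ∃ m, ∃ (par : MaxCliques G → MaxCliques G) (dep : MaxCliques G → ℕ),
      Conf par dep root ∧ IsJT par root (fun K : MaxCliques G => K.1) ∧
        (∑ x, dep x) = m :=
    ⟨_, par0, dep0, hT0, hjt0, rfl⟩
  obtain ⟨par, dep, hT, hjt, hsum⟩ := Nat.find_spec hPne
  have hmin : ∀ (par2 : MaxCliques G → MaxCliques G) (dep2 : MaxCliques G → ℕ),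
      Conf par2 dep2 root → IsJT par2 root (fun K : MaxCliques G => K.1) →
        (∑ x, dep x) ≤ ∑ x, dep2 x := by
    intro par2 dep2 hT2 hjt2
    by_contra hlt
    push_neg at hlt
    rw [hsum] at hlt
    exact Nat.find_min hPne hlt ⟨par2, dep2, hT2, hjt2, rfl⟩
  refine ⟨TGr par, tgr_isTree hT, ?_, par, ?_, ?_⟩
  · intro v
    exact jt_induce_connected hT hjt v (exists_mem_maxclique v)
  · intro i hi
    exact ⟨adj_par hT hi, fun p hp => parent_mem_path hT hi p hp⟩
  · intro i hi j hj hpj S hS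
    rw [subtree_set_eq hT j] at hS
    exact no_small_separator hT hjt hmin hi hj hpj hS
end

section
/- Let G be a chordal graph, let K_i be a maximal clique of G, and let v ∈ K_i. Then v is K_i-free (i.e., not contained in any clique-intersection X' ⊊ K_i with |X'| ≥ 2) if and only if either v is simplicial in G, or v is a cut-vertex of G such that no minimal separator of G contained in K_i other than {v} contains v. -/
def IsCliqueIntersection {α : Type*} (G : SimpleGraph α) (X : Set α) : Prop :=
  ∃ 𝒦 : Set (Set α), 𝒦.Nonempty ∧ (∀ K ∈ 𝒦, IsMaxClique G K) ∧ X = ⋂₀ 𝒦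

def IsUVSep {α : Type*} (G : SimpleGraph α) (S : Set α) (u v : α) : Prop :=
  u ∉ S ∧ v ∉ S ∧ ∀ p : G.Walk u v, ∃ w ∈ p.support, w ∈ S

def IsMinSep {α : Type*} (G : SimpleGraph α) (S : Set α) : Prop :=
  ∃ u v : α, u ≠ v ∧ ¬ G.Adj u v ∧ IsUVSep G S u v ∧
    ∀ S' ⊂ S, ¬ IsUVSep G S' u v

/-- `v` is `K`-free: `v` lies in no clique-intersection `X' ⊊ K` of size at
least two. -/
def KFree {α : Type*} (G : SimpleGraph α) (K : Set α) (v : α) : Prop :=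
  ¬ ∃ X' : Set α, IsCliqueIntersection G X' ∧ X' ⊂ K ∧ v ∈ X' ∧ 2 ≤ X'.ncard

/-- `v` is a cut-vertex of the connected graph `G`: every walk between some
pair of distinct vertices `a, b ≠ v` passes through `v`. -/
def IsCutVertex {α : Type*} (G : SimpleGraph α) (v : α) : Prop :=
  ∃ a b : α, a ≠ v ∧ b ≠ v ∧ a ≠ b ∧ ∀ p : G.Walk a b, v ∈ p.support


namespace Stmt17Aux
open SimpleGraph Walk

variable {α : Type*} {G : SimpleGraph α}

/-- take the first `n` darts of a walk -/
def wtake {u v : α} : (p : G.Walk u v) → (n : ℕ) → G.Walk u (p.getVert n)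
  | .nil, _ => .nil
  | .cons _ _, 0 => .nil
  | .cons h q, n + 1 => .cons h (wtake q n)

/-- drop the first `n` darts of a walk -/
def wdrop {u v : α} : (p : G.Walk u v) → (n : ℕ) → G.Walk (p.getVert n) v
  | .nil, _ => .nil
  | .cons h q, 0 => .cons h q
  | .cons _ q, n + 1 => wdrop q n

theorem length_wtake {u v : α} :
    ∀ (p : G.Walk u v) (n : ℕ), n ≤ p.length → (wtake p n).length = n
  | .nil, 0, _ => rfl
  | .nil, n + 1, h => by simp at h
  | .cons _ _, 0, _ => rfl
  | .cons h q, n + 1, hn => by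
      simpa [wtake] using length_wtake q n (by simpa using hn)

theorem length_wdrop {u v : α} :
    ∀ (p : G.Walk u v) (n : ℕ), (wdrop p n).length = p.length - n
  | .nil, _ => by simp [wdrop]
  | .cons _ _, 0 => by simp [wdrop]; rfl
  | .cons h q, n + 1 => by
      simpa [wdrop] using length_wdrop q n

theorem support_wtake_subset {u v : α} :
    ∀ (p : G.Walk u v) (n : ℕ) (x : α), x ∈ (wtake p n).support → x ∈ p.support
  | .nil, _, x, hx => hx
  | .cons _ _, 0, x, hx => by
      change x ∈ [u] at hx; simp at hx; simp [hx]
  | .cons h q, n + 1, x, hx => by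
      change x ∈ (Walk.cons h (wtake q n)).support at hx
      simp only [wtake, support_cons, List.mem_cons] at hx ⊢
      rcases hx with h1 | h2
      · exact Or.inl h1
      · exact Or.inr (support_wtake_subset q n x h2)

theorem support_wdrop_subset {u v : α} :
    ∀ (p : G.Walk u v) (n : ℕ) (x : α), x ∈ (wdrop p n).support → x ∈ p.support
  | .nil, _, x, hx => hx
  | .cons _ _, 0, x, hx => hx
  | .cons h q, n + 1, x, hx => by
      simp only [support_cons, List.mem_cons]
      exact Or.inr (support_wdrop_subset q n x hx)

theorem edges_wtake_subset {u v : α} :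
    ∀ (p : G.Walk u v) (n : ℕ) (e : Sym2 α), e ∈ (wtake p n).edges → e ∈ p.edges
  | .nil, _, e, he => he
  | .cons _ _, 0, e, he => by change e ∈ ([] : List (Sym2 α)) at he; simp at he
  | .cons h q, n + 1, e, he => by
      change e ∈ (Walk.cons h (wtake q n)).edges at he
      simp only [wtake, edges_cons, List.mem_cons] at he ⊢
      rcases he with h1 | h2
      · exact Or.inl h1
      · exact Or.inr (edges_wtake_subset q n e h2)

theorem getVert_wtake {u v : α} :
    ∀ (p : G.Walk u v) (n i : ℕ), i ≤ n → (wtake p n).getVert i = p.getVert i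
  | .nil, _, _, _ => by simp [wtake, Walk.getVert]
  | .cons _ _, 0, 0, _ => rfl
  | .cons h q, n + 1, 0, _ => Walk.getVert_zero _
  | .cons h q, n + 1, i + 1, hi => by
      simpa [wtake] using getVert_wtake q n i (by omega)

theorem isPath_wtake {u v : α} :
    ∀ (p : G.Walk u v) (n : ℕ), p.IsPath → (wtake p n).IsPath
  | .nil, _, hp => hp
  | .cons _ _, 0, _ => Walk.IsPath.nil
  | .cons h q, n + 1, hp => by
      rw [Walk.cons_isPath_iff] at hp
      rw [wtake]; refine (Walk.cons_isPath_iff _ _).2 ?_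
      exact ⟨isPath_wtake q n hp.1, fun hx => hp.2 (support_wtake_subset q n _ hx)⟩

theorem edge_getVert_mem_edges {u v : α} :
    ∀ (p : G.Walk u v) (i : ℕ), i < p.length →
      s(p.getVert i, p.getVert (i + 1)) ∈ p.edges
  | .nil, i, hi => by simp at hi
  | .cons h q, 0, _ => by
      simp [Walk.getVert]
  | .cons h q, i + 1, hi => by
      simp only [Walk.getVert_cons_succ, Walk.edges_cons, List.mem_cons]
      exact Or.inr (edge_getVert_mem_edges q i (by simpa using hi))

theorem getVert_mem_support {u v : α} (p : G.Walk u v) (i : ℕ) :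
    p.getVert i ∈ p.support := by
  by_cases h : i ≤ p.length
  · exact Walk.mem_support_iff_exists_getVert.2 ⟨i, rfl, h⟩
  · rw [Walk.getVert_of_length_le p (le_of_not_ge h)]
    exact Walk.end_mem_support p

theorem getVert_injOn_path {u v : α} (p : G.Walk u v) (hp : p.IsPath) :
    ∀ i j, i < j → j ≤ p.length → p.getVert i ≠ p.getVert j := by
  induction p with
  | nil => intro i j hij hj; simp at hj; omega
  | @cons a b c h q ih =>
    intro i j hij hj
    rw [Walk.cons_isPath_iff] at hp
    match i, j with
    | 0, j + 1 =>
      simp only [Walk.getVert_zero, Walk.getVert_cons_succ]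
      intro heq
      exact hp.2 (heq ▸ getVert_mem_support q j)
    | i + 1, j + 1 =>
      simp only [Walk.getVert_cons_succ]
      exact ih hp.1 i j (by omega) (by simpa using hj)

/-- exit lemma: a walk from inside `C` to outside `C` contains a vertex
outside `C` adjacent to a vertex of `C`. -/
theorem walk_exit {C : Set α} :
    ∀ {u w : α} (p : G.Walk u w), u ∈ C → w ∉ C →
      ∃ x y, x ∈ C ∧ y ∉ C ∧ G.Adj x y ∧ y ∈ p.support := by
  intro u w p
  induction p with
  | nil => intro hu hw; exact absurd hu hw
  | @cons a b c h q ih =>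
    intro hu hw
    by_cases hb : b ∈ C
    · obtain ⟨x, y, hx, hy, hxy, hys⟩ := ih hb hw
      exact ⟨x, y, hx, hy, hxy, by simp [hys]⟩
    · exact ⟨a, b, hu, hb, h, by simp⟩

lemma lemmaA (hch : Chordal G) {C K : Set α}
    (hCconn : ∀ u ∈ C, ∀ w ∈ C, ∃ p : G.Walk u w, ∀ x ∈ p.support, x ∈ C)
    (hCne : C.Nonempty) (hKfin : K.Finite) (hK : G.IsClique K)
    (hdisj : ∀ x ∈ K, x ∉ C) (hnbr : ∀ k ∈ K, ∃ c ∈ C, G.Adj c k) :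
    ∃ c ∈ C, ∀ k ∈ K, G.Adj c k := by
  classical
  have key : ∀ (n : ℕ) (K : Set α), K.Finite → K.ncard ≤ n → G.IsClique K →
      (∀ x ∈ K, x ∉ C) → (∀ k ∈ K, ∃ c ∈ C, G.Adj c k) →
      ∃ c ∈ C, ∀ k ∈ K, G.Adj c k := by
    intro n
    induction n with
    | zero =>
      intro K hKfin hcard _ _ _
      have : K = ∅ := (Set.ncard_eq_zero hKfin).mp (by omega)
      subst this
      exact ⟨hCne.some, hCne.some_mem, by simp⟩
    | succ n ihn =>
      intro K hKfin hcard hK hdisj hnbr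
      rcases K.eq_empty_or_nonempty with rfl | ⟨k, hkK0⟩
      · exact ⟨hCne.some, hCne.some_mem, by simp⟩
      set K₀ : Set α := K \ {k} with hK₀def
      have hk : k ∉ K₀ := by simp [hK₀def]
      have hins : insert k K₀ = K := by
        rw [hK₀def, Set.insert_diff_singleton, Set.insert_eq_self.mpr hkK0]
      rw [← hins] at hK hdisj hnbr ⊢
      have hK₀fin : K₀.Finite := hKfin.diff
      have hK₀card : K₀.ncard ≤ n := by
        have h1 := Set.ncard_diff_singleton_lt_of_mem hkK0 hKfin
        rw [← hK₀def] at h1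
        omega
      obtain ⟨c₀, hc₀C, hc₀K⟩ := ihn K₀ hK₀fin hK₀card (hK.subset (Set.subset_insert _ _))
        (fun x hx => hdisj x (Set.mem_insert_of_mem _ hx))
        (fun k' hk' => hnbr k' (Set.mem_insert_of_mem _ hk'))
      have hkK : k ∈ insert k K₀ := Set.mem_insert _ _
      have hkC : k ∉ C := hdisj k hkK
      set Q : ℕ → Prop := fun n => ∃ c, c ∈ C ∧ (∀ k' ∈ K₀, G.Adj c k') ∧
        ∃ p : G.Walk c k, p.IsPath ∧ (∀ x ∈ p.support, x = k ∨ x ∈ C) ∧ p.length = n with hQdef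
      have hQex : ∃ n, Q n := by
        obtain ⟨c', hc'C, hc'k⟩ := hnbr k hkK
        obtain ⟨r, hr⟩ := hCconn c₀ hc₀C c' hc'C
        refine ⟨(r.append (Walk.cons hc'k Walk.nil)).bypass.length, c₀, hc₀C, hc₀K, _,
          Walk.bypass_isPath _, ?_, rfl⟩
        intro x hx
        have hx' := Walk.support_bypass_subset _ hx
        rw [Walk.support_append, List.mem_append] at hx'
        rcases hx' with h1 | h2
        · exact Or.inr (hr x h1)
        · simp only [Walk.support_cons, Walk.support_nil, List.tail_cons,
            List.mem_singleton] at h2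
          exact Or.inl h2
      set m := Nat.find hQex with hm
      have hQm : Q m := Nat.find_spec hQex
      have hmin : ∀ n, n < m → ¬ Q n := fun n hn => Nat.find_min hQex hn
      obtain ⟨c, hcC, hcK₀, p, hp, hpsupp, hplen⟩ := hQm
      have hm1 : 1 ≤ m := by
        by_contra h0
        have hc : c = k := p.eq_of_length_eq_zero (by omega)
        exact hkC (hc ▸ hcC)
      have hm2 : m = 1 := by
        by_contra hne1
        have hm2' : 2 ≤ m := by omega
        have hc1nek : p.getVert 1 ≠ k := by
          intro heq
          have hadj01 : G.Adj c k := by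
            have h01 := p.adj_getVert_succ (by omega : 0 < p.length)
            rwa [Walk.getVert_zero, heq] at h01
          refine hmin 1 (by omega) ⟨c, hcC, hcK₀, Walk.cons hadj01 Walk.nil, ?_, ?_, rfl⟩
          · simp [Walk.isPath_def, hadj01.ne]
          · intro x hx
            simp only [Walk.support_cons, Walk.support_nil, List.mem_cons,
              List.mem_singleton, List.not_mem_nil, or_false] at hx
            rcases hx with rfl | hx
            · exact Or.inr hcC
            · exact Or.inl hx
        have hc1C : p.getVert 1 ∈ C := (hpsupp _ (getVert_mem_support p 1)).resolve_left hc1nek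
        have hclaim : ∀ k' ∈ K₀, G.Adj k' (p.getVert 1) := by
          intro k' hk'
          have hk'K : k' ∈ insert k K₀ := Set.mem_insert_of_mem _ hk'
          have hk'C : k' ∉ C := hdisj k' hk'K
          have hk'nek : k' ≠ k := fun h => hk (h ▸ hk')
          have hk'nsupp : k' ∉ p.support := by
            intro hmem
            rcases hpsupp k' hmem with h | h
            · exact hk'nek h
            · exact hk'C h
          set R : ℕ → Prop := fun j => 1 ≤ j ∧ j ≤ m ∧ G.Adj k' (p.getVert j) with hRdef
          have hRex : ∃ j, R j := by
            refine ⟨m, by omega, le_rfl, ?_⟩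
            have hgm : p.getVert m = k := by rw [← hplen]; exact p.getVert_length
            rw [hgm]
            exact hK hk'K hkK hk'nek
          set j := Nat.find hRex with hjdef
          have hRj : R j := Nat.find_spec hRex
          have hjmin : ∀ i, i < j → ¬ R i := fun i hi => Nat.find_min hRex hi
          obtain ⟨hj1', hjm, hjadj⟩ := hRj
          have hj1 : j = 1 := by
            by_contra hjne
            have hj2 : 2 ≤ j := by omega
            have hjlen : j ≤ p.length := by omega
            -- build the cycle
            set T : G.Walk c (p.getVert j) := wtake p j with hTdef
            have hTlen : T.length = j := length_wtake p j hjlen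
            have hTpath : T.IsPath := isPath_wtake p j hp
            have hTsupp : ∀ z ∈ T.support, z ∈ p.support := support_wtake_subset p j
            have hk'T : k' ∉ T.support := fun h => hk'nsupp (hTsupp _ h)
            have h₁ : G.Adj k' c := (hcK₀ k' hk').symm
            have h₂ : G.Adj (p.getVert j) k' := hjadj.symm
            set W : G.Walk k' k' := Walk.cons h₁ (T.append (Walk.cons h₂ Walk.nil)) with hWdef
            have hWsupp : W.support = k' :: (T.support ++ [k']) := by
              simp [hWdef, Walk.support_append]
            have hWedges : W.edges = s(k', c) :: (T.edges ++ [s(p.getVert j, k')]) := by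
              simp [hWdef, Walk.edges_append]
            have hWlen : W.length = j + 2 := by
              simp [hWdef, Walk.length_append, hTlen]
            have hcnej : c ≠ p.getVert j := by
              have := getVert_injOn_path p hp 0 j (by omega) hjlen
              rwa [Walk.getVert_zero] at this
            have hWcyc : W.IsCycle := by
              constructor
              · constructor
                · constructor
                  rw [hWedges]
                  refine List.Nodup.cons ?_ ?_
                  · intro hmem
                    rw [List.mem_append] at hmem
                    rcases hmem with h | h
                    · exact hk'T (SimpleGraph.Walk.fst_mem_support_of_mem_edges T h)
                    · rw [List.mem_singleton, Sym2.eq_iff] at h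
                      rcases h with ⟨h1, h2⟩ | ⟨h1, h2⟩
                      · exact hk'nsupp (h1 ▸ getVert_mem_support p j)
                      · exact hcnej h2
                  · rw [List.nodup_append]
                    refine ⟨hTpath.isTrail.edges_nodup, List.nodup_singleton _, ?_⟩
                    intro e he f hmem hef
                    rw [List.mem_singleton] at hmem
                    subst hmem
                    subst hef
                    exact hk'T (SimpleGraph.Walk.snd_mem_support_of_mem_edges T he)
                · intro hcontra
                  have hlc := congrArg SimpleGraph.Walk.length hcontra
                  rw [hWlen] at hlc; simp at hlc
              · rw [hWsupp, List.tail_cons, List.nodup_append]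
                exact ⟨hTpath.support_nodup, List.nodup_singleton _,
                  fun z hz z' hz' hzz' => hk'T ((hzz'.trans (List.mem_singleton.mp hz')) ▸ hz)⟩
            obtain ⟨x₀, hx₀, y₀, hy₀, hadjxy, hnedge⟩ := hch k' W hWcyc (by omega)
            have hedgeT : ∀ e ∈ T.edges, e ∈ W.edges := by
              intro e he; rw [hWedges]; simp only [List.mem_cons, List.mem_append]; tauto
            have hedge1 : s(k', c) ∈ W.edges := by rw [hWedges]; simp
            have hedge2 : s(p.getVert j, k') ∈ W.edges := by
              rw [hWedges]; simp
            have hmemW : ∀ z, z ∈ W.support → z = k' ∨ ∃ i, i ≤ j ∧ p.getVert i = z := by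
              intro z hz
              rw [hWsupp] at hz
              simp only [List.mem_cons, List.mem_append, List.mem_singleton,
                List.not_mem_nil, or_false] at hz
              rcases hz with rfl | hz | rfl
              · exact Or.inl rfl
              · right
                obtain ⟨n, hn1, hn2⟩ := Walk.mem_support_iff_exists_getVert.mp hz
                exact ⟨n, by omega, by rw [← getVert_wtake p j n (by omega)]; exact hn1⟩
              · exact Or.inl rfl
            -- key for chords incident to k'
            have key1 : ∀ i, i ≤ j → G.Adj k' (p.getVert i) → s(k', p.getVert i) ∉ W.edges → False := by
              intro i hij hadj hne
              rcases Nat.eq_zero_or_pos i with rfl | hi0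
              · rw [Walk.getVert_zero] at hne
                exact hne hedge1
              rcases eq_or_lt_of_le hij with rfl | hilt
              · exact hne (Sym2.eq_swap ▸ hedge2)
              · exact hjmin i hilt ⟨by omega, by omega, hadj⟩
            -- key for chords inside T
            have key2 : ∀ i₁ i₂, i₁ < i₂ → i₂ ≤ j → G.Adj (p.getVert i₁) (p.getVert i₂) →
                s(p.getVert i₁, p.getVert i₂) ∉ W.edges → False := by
              intro i₁ i₂ hlt hle hadj hne
              by_cases hcons : i₂ = i₁ + 1
              · subst hcons
                refine hne (hedgeT _ ?_)
                have := edge_getVert_mem_edges T i₁ (by omega)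
                rwa [getVert_wtake p j i₁ (by omega), getVert_wtake p j (i₁+1) (by omega)] at this
              · -- shortcut
                have hi2 : i₁ + 2 ≤ i₂ := by omega
                set q : G.Walk c k := (wtake p i₁).append (Walk.cons hadj (wdrop p i₂)) with hqdef
                have hqlen : q.length = i₁ + 1 + (p.length - i₂) := by
                  simp [hqdef, Walk.length_append, length_wtake p i₁ (by omega), length_wdrop p i₂]
                  omega
                have hqsupp : ∀ z ∈ q.support, z ∈ p.support := by
                  intro z hz
                  rw [hqdef, Walk.support_append, List.mem_append] at hz
                  rcases hz with h | h
                  · exact support_wtake_subset p i₁ z h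
                  · simp only [Walk.support_cons, List.tail_cons] at h
                    exact support_wdrop_subset p i₂ z h
                refine hmin q.bypass.length ?_ ⟨c, hcC, hcK₀, q.bypass, Walk.bypass_isPath _, ?_, rfl⟩
                · have hb := Walk.length_bypass_le q
                  rw [hqlen] at hb
                  omega
                · intro z hz
                  exact hpsupp z (hqsupp z (Walk.support_bypass_subset _ hz))
            -- now case analysis on the chord
            rcases hmemW x₀ hx₀ with rfl | ⟨i₁, hi₁, hgx⟩
            · rcases hmemW y₀ hy₀ with rfl | ⟨i₂, hi₂, hgy⟩
              · exact hadjxy.ne rfl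
              · exact key1 i₂ hi₂ (hgy ▸ hadjxy) (hgy ▸ hnedge)
            · rcases hmemW y₀ hy₀ with rfl | ⟨i₂, hi₂, hgy⟩
              · refine key1 i₁ hi₁ (hgx ▸ hadjxy.symm) ?_
                rw [hgx, Sym2.eq_swap]
                exact hnedge
              · subst hgx; subst hgy
                rcases lt_trichotomy i₁ i₂ with h | h | h
                · exact key2 i₁ i₂ h hi₂ hadjxy hnedge
                · exact hadjxy.ne (by rw [h])
                · exact key2 i₂ i₁ h hi₁ hadjxy.symm (Sym2.eq_swap ▸ hnedge)
          rwa [hj1] at hjadj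
        -- use the tail
        have hpnnil : ¬ p.Nil := by
          rw [Walk.not_nil_iff_lt_length]; omega
        refine hmin (m - 1) (by omega) ⟨p.getVert 1, hc1C, fun k' hk' => (hclaim k' hk').symm,
          p.tail, ?_, ?_, ?_⟩
        · rw [Walk.isPath_def, Walk.support_tail_of_not_nil _ hpnnil]
          exact hp.support_nodup.tail
        · intro z hz
          rw [Walk.support_tail_of_not_nil _ hpnnil] at hz
          exact hpsupp z (List.mem_of_mem_tail hz)
        · have := Walk.length_tail_add_one hpnnil
          omega
      -- m = 1 : extract adjacency
      have hadjck : G.Adj c k := by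
        have h01 := p.adj_getVert_succ (by omega : 0 < p.length)
        rw [Walk.getVert_zero] at h01
        have : p.getVert 1 = k := by
          have := p.getVert_of_length_le (by omega : p.length ≤ 1)
          exact this
        rwa [this] at h01
      refine ⟨c, hcC, ?_⟩
      intro k'' hk''
      rcases Set.mem_insert_iff.mp hk'' with rfl | h
      · exact hadjck
      · exact hcK₀ k'' h

  exact key K.ncard K hKfin le_rfl hK hdisj hnbr

lemma UVSep_symm {S : Set α} {u v : α} (h : IsUVSep G S u v) : IsUVSep G S v u := by
  refine ⟨h.2.1, h.1, ?_⟩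
  intro p
  obtain ⟨z, hz1, hz2⟩ := h.2.2 p.reverse
  rw [Walk.support_reverse, List.mem_reverse] at hz1
  exact ⟨z, hz1, hz2⟩

lemma exists_maxclique [Fintype α] (S : Set α) (hS : G.IsClique S) :
    ∃ K, IsMaxClique G K ∧ S ⊆ K := by
  obtain ⟨K, hK, hmax⟩ := Set.Finite.exists_maximalFor (fun s : Set α => s.ncard)
    {T | G.IsClique T ∧ S ⊆ T} (Set.toFinite _) ⟨S, hS, subset_rfl⟩
  refine ⟨K, ⟨hK.1, ?_⟩, hK.2⟩
  intro K' hK' hsub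
  have hmem : K' ∈ {T | G.IsClique T ∧ S ⊆ T} := ⟨hK', hK.2.trans hsub⟩
  have h2 := hmax hmem (Set.ncard_le_ncard hsub (Set.toFinite _))
  exact (Set.eq_of_subset_of_ncard_le hsub h2 (Set.toFinite _)).symm

/-- The neighbourhood of the component of `b` in `G - Ki` is a minimal separator
contained in `Ki`. -/
lemma comp_minsep [Fintype α] (hch : Chordal G) {Ki : Set α} (hKi : IsMaxClique G Ki)
    {b : α} (hb : b ∉ Ki) :
    ∃ S : Set α, ∃ y : α, IsMinSep G S ∧ S ⊆ Ki ∧ y ∈ Ki ∧ y ∉ S ∧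
      IsUVSep G S b y ∧ ∀ z ∈ Ki, G.Adj b z → z ∈ S := by
  classical
  set C : Set α := {u | ∃ p : G.Walk b u, ∀ x ∈ p.support, x ∉ Ki} with hCdef
  have hbC : b ∈ C := ⟨Walk.nil, by simpa using hb⟩
  have hCKi : ∀ u ∈ C, u ∉ Ki := by
    rintro u ⟨p, hp⟩ hu
    exact hp u (Walk.end_mem_support p) hu
  have hCsupp : ∀ (u : α) (p : G.Walk b u), (∀ x ∈ p.support, x ∉ Ki) →
      ∀ x ∈ p.support, x ∈ C := by
    intro u p hp x hx
    exact ⟨p.takeUntil x hx, fun z hz => hp z (Walk.support_takeUntil_subset _ _ hz)⟩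
  have hCconn : ∀ u ∈ C, ∀ w ∈ C, ∃ p : G.Walk u w, ∀ x ∈ p.support, x ∈ C := by
    rintro u ⟨pu, hpu⟩ w ⟨pw, hpw⟩
    refine ⟨pu.reverse.append pw, ?_⟩
    intro x hx
    rw [Walk.mem_support_append_iff] at hx
    rcases hx with hx | hx
    · rw [Walk.support_reverse, List.mem_reverse] at hx
      exact hCsupp u pu hpu x hx
    · exact hCsupp w pw hpw x hx
  have hclosed : ∀ u ∈ C, ∀ z, G.Adj u z → z ∉ Ki → z ∈ C := by
    rintro u ⟨p, hp⟩ z hadj hz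
    refine ⟨p.concat hadj, ?_⟩
    intro x hx
    rw [Walk.support_concat, List.mem_append,
      List.mem_singleton] at hx
    rcases hx with hx | rfl
    · exact hp x hx
    · exact hz
  set S : Set α := {z | z ∈ Ki ∧ ∃ u ∈ C, G.Adj u z} with hSdef
  have hSKi : S ⊆ Ki := fun z hz => hz.1
  have hKine : ∃ y ∈ Ki, y ∉ S := by
    by_contra hy
    push_neg at hy
    obtain ⟨c, hcC, hc⟩ := lemmaA hch hCconn ⟨b, hbC⟩ (Set.toFinite Ki) hKi.1
      (fun x hx hxC => hCKi _ hxC hx)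
      (fun k hk => (hy k hk).2)
    have hclique : G.IsClique (insert c Ki) :=
      hKi.1.insert (fun b' hb' _ => hc b' hb')
    have heq := hKi.2 _ hclique (Set.subset_insert _ _)
    have : c ∈ Ki := heq ▸ Set.mem_insert c Ki
    exact hCKi c hcC this
  obtain ⟨y, hyKi, hyS⟩ := hKine
  have hbS : b ∉ S := fun h => hb (hSKi h)
  have hyC : y ∉ C := fun h => hCKi y h hyKi
  have hUV : IsUVSep G S b y := by
    refine ⟨hbS, hyS, ?_⟩
    intro p
    obtain ⟨x, z, hxC, hzC, hxz, hzsupp⟩ := walk_exit p hbC hyC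
    have hzKi : z ∈ Ki := by
      by_contra h
      exact hzC (hclosed x hxC z hxz h)
    exact ⟨z, hzsupp, hzKi, x, hxC, hxz⟩
  have hminS : ∀ S' ⊂ S, ¬ IsUVSep G S' b y := by
    intro S' hS' hUV'
    obtain ⟨s, hsS, hsS'⟩ := Set.exists_of_ssubset hS'
    have hsS2 := hsS
    obtain ⟨hsKi, u, huC, hus⟩ := hsS2
    obtain ⟨pu, hpu⟩ := huC
    have hsy : s ≠ y := fun h => hyS (h ▸ hsS)
    have hadj_sy : G.Adj s y := hKi.1 hsKi hyKi hsy
    set w : G.Walk b y := pu.append (Walk.cons hus (Walk.cons hadj_sy Walk.nil)) with hwdef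
    obtain ⟨z, hzsupp, hzS'⟩ := hUV'.2.2 w
    have hzS : z ∈ S := hS'.1 hzS'
    rw [hwdef, Walk.mem_support_append_iff] at hzsupp
    rcases hzsupp with h | h
    · exact hpu z h (hSKi hzS)
    · simp only [Walk.support_cons, Walk.support_nil, List.mem_cons,
        List.mem_singleton, List.not_mem_nil, or_false] at h
      rcases h with rfl | rfl | rfl
      · exact hCKi z ⟨pu, hpu⟩ (hSKi hzS)
      · exact hsS' hzS'
      · exact hyS hzS
  have hby : b ≠ y := fun h => hb (h ▸ hyKi)
  have hnadj : ¬ G.Adj b y := fun h => hyS ⟨hyKi, b, hbC, h⟩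
  exact ⟨S, y, ⟨b, y, hby, hnadj, hUV, hminS⟩, hSKi, hyKi, hyS, hUV,
    fun z hz hadj => ⟨hz, b, hbC, hadj⟩⟩

/-- If `v` is `Ki`-free then every minimal separator inside `Ki` containing `v`
is `{v}`. -/
lemma KFree_minsep [Fintype α] (hch : Chordal G) {Ki : Set α} (hKi : IsMaxClique G Ki)
    {v : α} (hKF : KFree G Ki v) :
    ∀ S : Set α, IsMinSep G S → S ⊆ Ki → v ∈ S → S = {v} := by
  classical
  intro S hmin hSKi hvS
  by_contra hne
  have hw : ∃ w ∈ S, w ≠ v := by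
    by_contra h
    push_neg at h
    exact hne (Set.eq_singleton_iff_unique_mem.mpr ⟨hvS, h⟩)
  obtain ⟨w, hwS, hwv⟩ := hw
  obtain ⟨x, y, hxy, hnadj, hUV, hminSep⟩ := hmin
  have build : ∀ (a bb : α), IsUVSep G S a bb → (∀ S' ⊂ S, ¬IsUVSep G S' a bb) →
      ∃ c, c ∉ S ∧ (∀ s ∈ S, G.Adj c s) ∧ (∃ p : G.Walk a c, ∀ z ∈ p.support, z ∉ S) := by
    intro a bb hUV hminS
    set Ca : Set α := {u | ∃ p : G.Walk a u, ∀ z ∈ p.support, z ∉ S} with hCadef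
    have haCa : a ∈ Ca := ⟨Walk.nil, by simpa using hUV.1⟩
    have hCaS : ∀ u ∈ Ca, u ∉ S := by
      rintro u ⟨p, hp⟩ hu
      exact hp u (Walk.end_mem_support p) hu
    have hCasupp : ∀ (u : α) (p : G.Walk a u), (∀ z ∈ p.support, z ∉ S) →
        ∀ z ∈ p.support, z ∈ Ca := by
      intro u p hp z hz
      exact ⟨p.takeUntil z hz, fun t ht => hp t (Walk.support_takeUntil_subset _ _ ht)⟩
    have hCaconn : ∀ u ∈ Ca, ∀ w' ∈ Ca, ∃ p : G.Walk u w', ∀ z ∈ p.support, z ∈ Ca := by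
      rintro u ⟨pu, hpu⟩ w' ⟨pw, hpw⟩
      refine ⟨pu.reverse.append pw, ?_⟩
      intro z hz
      rw [Walk.mem_support_append_iff] at hz
      rcases hz with hz | hz
      · rw [Walk.support_reverse, List.mem_reverse] at hz
        exact hCasupp u pu hpu z hz
      · exact hCasupp w' pw hpw z hz
    have hclosed : ∀ u ∈ Ca, ∀ z, G.Adj u z → z ∉ S → z ∈ Ca := by
      rintro u ⟨p, hp⟩ z hadj hz
      refine ⟨p.concat hadj, ?_⟩
      intro t ht
      rw [Walk.support_concat, List.mem_append,
        List.mem_singleton] at ht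
      rcases ht with ht | rfl
      · exact hp t ht
      · exact hz
    have hbbCa : bb ∉ Ca := by
      rintro ⟨p, hp⟩
      obtain ⟨z, hz1, hz2⟩ := hUV.2.2 p
      exact hp z hz1 hz2
    have hnbr : ∀ s ∈ S, ∃ c ∈ Ca, G.Adj c s := by
      intro s hsS
      have h1 : ¬ IsUVSep G (S \ {s}) a bb := hminS _ (Set.sdiff_singleton_ssubset.mpr hsS)
      rw [IsUVSep] at h1
      push_neg at h1
      obtain ⟨p, hp⟩ := h1 (fun h => hUV.1 h.1) (fun h => hUV.2.1 h.1)
      obtain ⟨x0, y0, hx0, hy0, hadj0, hy0supp⟩ := walk_exit p haCa hbbCa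
      have hy0S : y0 ∈ S := by
        by_contra h
        exact hy0 (hclosed x0 hx0 y0 hadj0 h)
      have hy0s : y0 = s := by
        have h2 := hp y0 hy0supp
        rw [Set.mem_diff, not_and, not_not] at h2
        exact (h2 hy0S : y0 ∈ ({s} : Set α))
      subst hy0s
      exact ⟨x0, hx0, hadj0⟩
    obtain ⟨c, hcCa, hc⟩ := lemmaA hch hCaconn ⟨a, haCa⟩ (Set.toFinite S)
      (hKi.1.subset hSKi) (fun s hs hsCa => hCaS _ hsCa hs) hnbr
    obtain ⟨p, hp⟩ := hcCa
    exact ⟨c, fun h => hp c (Walk.end_mem_support p) h, hc, p, hp⟩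
  obtain ⟨cx, hcxS, hcx, px, hpx⟩ := build x y hUV hminSep
  obtain ⟨cy, hcyS, hcy, py, hpy⟩ := build y x (UVSep_symm hUV)
    (fun S' hS' hUV' => hminSep S' hS' (UVSep_symm hUV'))
  have hcxcy : cx ≠ cy := by
    rintro rfl
    obtain ⟨z, hz1, hz2⟩ := hUV.2.2 (px.append py.reverse)
    rw [Walk.mem_support_append_iff] at hz1
    rcases hz1 with h | h
    · exact hpx z h hz2
    · rw [Walk.support_reverse, List.mem_reverse] at h
      exact hpy z h hz2
  have hcadj : ¬ G.Adj cx cy := by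
    intro hadj
    obtain ⟨z, hz1, hz2⟩ := hUV.2.2 (px.append (Walk.cons hadj py.reverse))
    rw [Walk.mem_support_append_iff] at hz1
    rcases hz1 with h | h
    · exact hpx z h hz2
    · rw [Walk.support_cons, List.mem_cons] at h
      rcases h with rfl | h
      · exact hcxS hz2
      · rw [Walk.support_reverse, List.mem_reverse] at h
        exact hpy z h hz2
  have hone : cx ∉ Ki ∨ cy ∉ Ki := by
    by_contra h
    push_neg at h
    exact hcadj (hKi.1 h.1 h.2 hcxcy)
  obtain ⟨c, hcS, hcKi, hcadjS⟩ : ∃ c, c ∉ S ∧ c ∉ Ki ∧ ∀ s ∈ S, G.Adj c s := by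
    rcases hone with h | h
    · exact ⟨cx, hcxS, h, hcx⟩
    · exact ⟨cy, hcyS, h, hcy⟩
  have hclique : G.IsClique (insert c S) :=
    (hKi.1.subset hSKi).insert (fun s hs _ => hcadjS s hs)
  obtain ⟨K', hK', hsubK'⟩ := exists_maxclique _ hclique
  have hcK' : c ∈ K' := hsubK' (Set.mem_insert _ _)
  have hSK' : S ⊆ K' := fun s hs => hsubK' (Set.mem_insert_of_mem _ hs)
  have hK'ne : K' ≠ Ki := fun h => hcKi (h ▸ hcK')
  refine hKF ⟨K' ∩ Ki, ⟨{K', Ki}, ⟨K', Set.mem_insert _ _⟩, ?_, (Set.sInter_pair _ _).symm⟩,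
    ⟨Set.inter_subset_right, ?_⟩, ⟨hSK' hvS, hSKi hvS⟩, ?_⟩
  · rintro K (rfl | rfl)
    · exact hK'
    · exact hKi
  · intro hsub
    have hKisub : Ki ⊆ K' := fun z hz => (hsub hz).1
    exact hK'ne (hKi.2 K' hK'.1 hKisub)
  · have h2 : 1 < (K' ∩ Ki).ncard := by
      rw [Set.one_lt_ncard (Set.toFinite _)]
      exact ⟨v, ⟨hSK' hvS, hSKi hvS⟩, w, ⟨hSK' hwS, hSKi hwS⟩, fun h => hwv h.symm⟩
    exact h2

/-- A simplicial vertex is `Ki`-free. -/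
lemma simplicial_KFree {Ki : Set α} (hKi : IsMaxClique G Ki) {v : α} (hv : v ∈ Ki)
    (hsimp : G.IsClique (G.neighborSet v)) : KFree G Ki v := by
  rintro ⟨X', ⟨𝒦, h𝒦ne, h𝒦max, rfl⟩, hsub, hvX, hcard⟩
  have hNv : G.IsClique (insert v (G.neighborSet v)) :=
    hsimp.insert (fun b hb _ => (hb : G.Adj v b))
  have huniq : ∀ K, IsMaxClique G K → v ∈ K → K = insert v (G.neighborSet v) := by
    intro K hK hvK
    have hsub' : K ⊆ insert v (G.neighborSet v) := by
      intro u hu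
      by_cases h : u = v
      · exact h ▸ Set.mem_insert _ _
      · exact Set.mem_insert_of_mem _ (hK.1 hvK hu (Ne.symm h) : G.Adj v u)
    exact (hK.2 _ hNv hsub').symm
  have hKieq := huniq Ki hKi hv
  obtain ⟨K₀, hK₀⟩ := h𝒦ne
  have hX : ⋂₀ 𝒦 = insert v (G.neighborSet v) := by
    apply subset_antisymm
    · rw [← huniq K₀ (h𝒦max _ hK₀) (hvX K₀ hK₀)]
      exact Set.sInter_subset_of_mem hK₀
    · intro z hz
      intro K hK
      rw [huniq K (h𝒦max _ hK) (hvX K hK)]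
      exact hz
  rw [hX, ← hKieq] at hsub
  exact hsub.2 hsub.1

end Stmt17Aux

/-- In a connected chordal graph `G`, a vertex `v` of a maximal clique `K_i`
is `K_i`-free iff it is simplicial, or it is a cut-vertex contained in no
minimal separator of `G` included in `K_i` other than `{v}`. -/
theorem stmt17 {α : Type*} [Fintype α] (G : SimpleGraph α)
    (hconn : G.Connected) (hch : Chordal G)
    (Ki : Set α) (hKi : IsMaxClique G Ki) (v : α) (hv : v ∈ Ki) :
    KFree G Ki v ↔
      (G.IsClique (G.neighborSet v) ∨
        (IsCutVertex G v ∧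
          ∀ S : Set α, IsMinSep G S → S ⊆ Ki → v ∈ S → S = {v})) := by
  constructor
  · intro hKF
    by_cases hsimp : G.IsClique (G.neighborSet v)
    · exact Or.inl hsimp
    right
    have hsep := Stmt17Aux.KFree_minsep hch hKi hKF
    refine ⟨?_, hsep⟩
    rw [SimpleGraph.isClique_iff, Set.Pairwise] at hsimp
    push_neg at hsimp
    obtain ⟨a, ha, b0, hb0, hab, hnadj⟩ := hsimp
    have hex : ∃ b', b' ∈ G.neighborSet v ∧ b' ∉ Ki := by
      by_cases haKi : a ∈ Ki
      · by_cases hbKi : b0 ∈ Ki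
        · exact absurd (hKi.1 haKi hbKi hab) hnadj
        · exact ⟨b0, hb0, hbKi⟩
      · exact ⟨a, ha, haKi⟩
    obtain ⟨b', hb'N, hb'Ki⟩ := hex
    obtain ⟨S, y, hminsep, hSKi, hyKi, hyS, hUV, hmem⟩ :=
      Stmt17Aux.comp_minsep hch hKi hb'Ki
    have hvS : v ∈ S := hmem v hv ((hb'N : G.Adj v b').symm)
    have hSv : S = {v} := hsep S hminsep hSKi hvS
    refine ⟨b', y, fun h => hb'Ki (h ▸ hv), fun h => hyS (by rw [h]; exact hvS),
      fun h => hb'Ki (h ▸ hyKi), ?_⟩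
    intro p
    obtain ⟨z, hz1, hz2⟩ := hUV.2.2 p
    rw [hSv, Set.mem_singleton_iff] at hz2
    exact hz2 ▸ hz1
  · rintro (hsimp | ⟨hcut, hsep⟩)
    · exact Stmt17Aux.simplicial_KFree hKi hv hsimp
    · rintro ⟨X', ⟨𝒦, h𝒦ne, h𝒦max, rfl⟩, hsub, hvX, hcard⟩
      have hKne : ∃ K ∈ 𝒦, K ≠ Ki := by
        by_contra h
        push_neg at h
        have heq : ⋂₀ 𝒦 = Ki := by
          apply subset_antisymm
          · obtain ⟨K₀, hK₀⟩ := h𝒦ne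
            rw [← h K₀ hK₀]
            exact Set.sInter_subset_of_mem hK₀
          · intro z hz K hK
            rw [h K hK]; exact hz
        rw [heq] at hsub
        exact hsub.2 hsub.1
      obtain ⟨K, hK𝒦, hKne⟩ := hKne
      have hKmax := h𝒦max K hK𝒦
      have hXK : ⋂₀ 𝒦 ⊆ K := Set.sInter_subset_of_mem hK𝒦
      have hXKi : ⋂₀ 𝒦 ⊆ Ki := hsub.1
      obtain ⟨w, hwX, hwv⟩ := Set.exists_ne_of_one_lt_ncard (s := ⋂₀ 𝒦) (by omega) v
      have hb0 : ∃ b0 ∈ K, b0 ∉ Ki := by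
        by_contra h
        push_neg at h
        exact hKne ((hKmax.2 Ki hKi.1 h).symm)
      obtain ⟨b0, hb0K, hb0Ki⟩ := hb0
      obtain ⟨S, y, hminsep, hSKi, hyKi, hyS, hUV, hmem⟩ :=
        Stmt17Aux.comp_minsep hch hKi hb0Ki
      have hvK : v ∈ K := hXK hvX
      have hwK : w ∈ K := hXK hwX
      have hvS : v ∈ S := hmem v hv (hKmax.1 hb0K hvK (fun h => hb0Ki (h ▸ hv)))
      have hwS : w ∈ S := hmem w (hXKi hwX)
        (hKmax.1 hb0K hwK (fun h => hb0Ki (h ▸ hXKi hwX)))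
      have hSv := hsep S hminsep hSKi hvS
      rw [hSv, Set.mem_singleton_iff] at hwS
      exact hwv hwS
end

section
/- Let G be a graph admitting a 4-Steiner root T, let K be a maximal clique of G, and let v ∈ K be a simplicial vertex of G. Then the tree T' obtained from T by: replacing v with a Steiner node, and re-attaching v to a closest central node c of T⟨K⟩ via a path of length 4 − max_{u ∈ K∖{v}} dist_T(c,u) whose internal nodes are all Steiner, is again a 4-Steiner root of G; moreover dist_{T'}(u,w) ≥ dist_T(u,w) for all real u,w. -/
noncomputable def setEcc {V : Type*} (T : SimpleGraph V) (S : Set V) (v : V) : ℕ :=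
  sSup {d | ∃ u ∈ S, T.dist v u = d}

noncomputable def setDiam {V : Type*} (T : SimpleGraph V) (S : Set V) : ℕ :=
  sSup {d | ∃ u ∈ S, ∃ w ∈ S, T.dist u w = d}

noncomputable def setRad {V : Type*} (T : SimpleGraph V) (S : Set V) : ℕ :=
  sInf {e | ∃ v ∈ S, setEcc T S v = e}

noncomputable def setCenter {V : Type*} (T : SimpleGraph V) (S : Set V) : Set V :=
  {v ∈ S | setEcc T S v = setRad T S}

/-- `T` is a `k`-Steiner root of `G` (via the injection `f` of the vertices of
`G` into the nodes of `T`): `T` is a tree and two distinct vertices of `G` are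
adjacent iff their images are at distance at most `k` in `T`. -/
def IsSteinerRoot (k : ℕ) {α β : Type*} (G : SimpleGraph α) (T : SimpleGraph β)
    (f : α → β) : Prop :=
  Function.Injective f ∧ T.IsTree ∧
    ∀ u v : α, u ≠ v → (G.Adj u v ↔ T.dist (f u) (f v) ≤ k)

/-- The vertex set of the smallest subtree of the tree `T` containing `X`:
all nodes lying on a path between two elements of `X`. -/
def span {β : Type*} (T : SimpleGraph β) (X : Set β) : Set β :=
  {w | ∃ u ∈ X, ∃ v ∈ X, ∃ p : T.Walk u v, p.IsPath ∧ w ∈ p.support}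

/-- `M`: the largest distance in `T` from `c` to a vertex of `K ∖ {v}`. -/
noncomputable def maxDistToClique {α β : Type*} (T : SimpleGraph β) (f : α → β)
    (K : Set α) (v : α) (c : β) : ℕ :=
  sSup {d | ∃ u ∈ K, u ≠ v ∧ T.dist c (f u) = d}

/-- The length `L = 4 - max_{u ∈ K∖{v}} dist_T(c,u)` of the re-attachment path. -/
noncomputable def attachLen {α β : Type*} (T : SimpleGraph β) (f : α → β)
    (K : Set α) (v : α) (c : β) : ℕ :=
  4 - maxDistToClique T f K v c

/-- Relation generating the modified tree: the old tree `T` (in which the old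
node of `v` is kept, but becomes Steiner), together with a new path
`c - 0 - 1 - ⋯ - (L-1)` of length `L` hanging from `c`, all of whose internal
nodes are Steiner. -/
def pathRel {β : Type*} (T : SimpleGraph β) (c : β) (L : ℕ) :
    β ⊕ Fin L → β ⊕ Fin L → Prop
  | Sum.inl a, Sum.inl b => T.Adj a b
  | Sum.inl a, Sum.inr i => a = c ∧ (i : ℕ) = 0
  | Sum.inr i, Sum.inr j => (j : ℕ) = (i : ℕ) + 1
  | _, _ => False

/-- The tree obtained from `T` by attaching a path of length `L` at `c`. -/
def newTree {β : Type*} (T : SimpleGraph β) (c : β) (L : ℕ) :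
    SimpleGraph (β ⊕ Fin L) :=
  SimpleGraph.fromRel (pathRel T c L)

/-- The new placement of the real vertices: `v` moves to the end of the new
path (its old node becomes Steiner); every other vertex keeps its node. -/
noncomputable def newEmb {α β : Type*} [DecidableEq α] (f : α → β) (v : α) (L : ℕ) :
    α → β ⊕ Fin L :=
  fun u =>
    if u = v then
      if h : 0 < L then Sum.inr (⟨L - 1, by omega⟩ : Fin L) else Sum.inl (f u)
    else Sum.inl (f u)

section Helpers

open SimpleGraph Walk

set_option linter.unusedSectionVars false

section PartA
variable {β : Type*} [DecidableEq β] {T : SimpleGraph β}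

/-- In a tree, any path realizes the distance between its endpoints. -/
lemma tree_path_length (hT : T.IsTree) {x y : β} (p : T.Walk x y) (hp : p.IsPath) :
    p.length = T.dist x y := by
  obtain ⟨q, hq⟩ := hT.isConnected.exists_walk_length_eq_dist x y
  have hqb : q.bypass.length ≤ T.dist x y := hq ▸ q.length_bypass_le
  have hdle : T.dist x y ≤ q.bypass.length := SimpleGraph.dist_le _
  have : p = q.bypass := by
    have := hT.IsAcyclic.path_unique ⟨p, hp⟩ ⟨q.bypass, q.bypass_isPath⟩
    exact congrArg Subtype.val this
  rw [this]
  omega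

/-- In a tree, a vertex on a path splits the distance additively. -/
lemma tree_split_dist (hT : T.IsTree) {x y u : β} (p : T.Walk x y) (hp : p.IsPath)
    (hu : u ∈ p.support) : T.dist x u + T.dist u y = T.dist x y := by
  have h1 := tree_path_length hT _ (hp.takeUntil hu)
  have h2 := tree_path_length hT _ (hp.dropUntil hu)
  have h3 : (p.takeUntil u hu).length + (p.dropUntil u hu).length = p.length := by
    rw [← length_append, take_spec]
  have h4 := tree_path_length hT p hp
  omega

/-- A path between two vertices on the support of a path, staying inside the support. -/
lemma exists_path_between_support {x y g t : β} (p : T.Walk x y) (hp : p.IsPath)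
    (hg : g ∈ p.support) (ht : t ∈ p.support) :
    ∃ w : T.Walk g t, w.IsPath ∧ ∀ z ∈ w.support, z ∈ p.support := by
  classical
  by_cases h : g ∈ (p.takeUntil t ht).support
  · refine ⟨(p.takeUntil t ht).dropUntil g h, (hp.takeUntil ht).dropUntil h, fun z hz => ?_⟩
    exact p.support_takeUntil_subset ht (((p.takeUntil t ht).support_dropUntil_subset h) hz)
  · have hg' : g ∈ (p.dropUntil t ht).support := by
      have := p.take_spec ht
      rw [← this, mem_support_append_iff] at hg
      tauto
    refine ⟨((p.dropUntil t ht).takeUntil g hg').reverse, ((hp.dropUntil ht).takeUntil hg').reverse,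
      fun z hz => ?_⟩
    rw [support_reverse, List.mem_reverse] at hz
    exact p.support_dropUntil_subset ht (((p.dropUntil t ht).support_takeUntil_subset hg') hz)

/-- Extraction of the first vertex of a walk belonging to a set. -/
lemma exists_first_mem {S : Set β} : ∀ {x a : β} (_ : T.Walk x a) (_ : a ∈ S),
    ∃ g ∈ S, ∃ W : T.Walk x g, ∀ z ∈ W.support, z ∈ S → z = g := by
  classical
  intro x a Q ha
  induction Q with
  | nil => exact ⟨_, ha, Walk.nil, by simp⟩
  | @cons u w a h Q ih =>
    by_cases hu : u ∈ S
    · exact ⟨u, hu, Walk.nil, by simp⟩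
    · obtain ⟨g, hgS, W, hW⟩ := ih ha
      refine ⟨g, hgS, Walk.cons h W, ?_⟩
      intro z hz hzS
      rw [support_cons, List.mem_cons] at hz
      rcases hz with h1 | h1
      · exact absurd (h1 ▸ hzS) hu
      · exact hW z h1 hzS

/-- Gate property: for any vertex `x` and any path `P` in a tree, there is a vertex `g`
on `P` through which all distances from `x` to `P` factor. -/
lemma tree_gate (hT : T.IsTree) {a b : β} (P : T.Walk a b) (hP : P.IsPath) (x : β) :
    ∃ g ∈ P.support, ∀ t ∈ P.support, T.dist x t = T.dist x g + T.dist g t := by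
  classical
  obtain ⟨Q⟩ := hT.isConnected x a
  obtain ⟨g, hgP, W, hW⟩ := exists_first_mem (S := {z | z ∈ P.support}) Q P.start_mem_support
  have hWb : W.bypass.IsPath := W.bypass_isPath
  have hWbs : ∀ z ∈ W.bypass.support, z ∈ P.support → z = g :=
    fun z hz => hW z (W.support_bypass_subset hz)
  refine ⟨g, hgP, fun t ht => ?_⟩
  obtain ⟨R, hR, hRs⟩ := exists_path_between_support P hP hgP ht
  have happ : (W.bypass.append R).IsPath := by
    rw [isPath_def, support_append]
    refine List.Nodup.append (hWb.support_nodup) ?_ ?_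
    · have := hR.support_nodup
      rw [R.support_eq_cons] at this
      exact this.of_cons
    · intro z hz1 hz2
      have hzg : z = g := hWbs z hz1 (hRs z (List.mem_of_mem_tail hz2))
      subst hzg
      have := hR.support_nodup
      rw [R.support_eq_cons] at this
      exact (List.nodup_cons.mp this).1 hz2
  have h1 := tree_path_length hT _ happ
  have h2 := tree_path_length hT _ hWb
  have h3 := tree_path_length hT _ hR
  rw [length_append] at h1
  omega

/-- Two vertices on a path: distance is the difference of positions. -/
lemma tree_support_dist (hT : T.IsTree) {p q u w : β} (P : T.Walk p q) (hP : P.IsPath)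
    (hu : u ∈ P.support) (hw : w ∈ P.support) :
    T.dist u w = Nat.dist (T.dist p u) (T.dist p w) := by
  classical
  by_cases h : u ∈ (P.takeUntil w hw).support
  · have h1 := tree_split_dist hT _ (hP.takeUntil hw) h
    have h2 := tree_path_length hT _ (hP.takeUntil hw)
    have h3 := P.length_takeUntil_le hw
    -- dist p u + dist u w = dist p w
    simp only [Nat.dist]
    omega
  · have hu2 : u ∈ (P.dropUntil w hw).support := by
      have := P.take_spec hw
      rw [← this, mem_support_append_iff] at hu
      tauto
    have hsupp : P.support = (P.takeUntil w hw).support ++ (P.dropUntil w hw).support.tail := by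
      conv_lhs => rw [← P.take_spec hw]
      exact support_append _ _
    have hA : ((P.takeUntil w hw).append ((P.dropUntil w hw).takeUntil u hu2)).IsPath := by
      rw [isPath_def, support_append]
      have hnd := hP.support_nodup
      rw [hsupp] at hnd
      have hd := List.disjoint_of_nodup_append hnd
      refine List.Nodup.append (hP.takeUntil hw).support_nodup ?_ ?_
      · have := ((hP.dropUntil hw).takeUntil hu2).support_nodup
        rw [((P.dropUntil w hw).takeUntil u hu2).support_eq_cons] at this
        exact this.of_cons
      · intro z hz1 hz2
        refine hd hz1 ?_
        have hzs : z ∈ (P.dropUntil w hw).support :=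
          (P.dropUntil w hw).support_takeUntil_subset hu2 (List.mem_of_mem_tail hz2)
        have hznw : z ≠ w := by
          have := ((hP.dropUntil hw).takeUntil hu2).support_nodup
          rw [((P.dropUntil w hw).takeUntil u hu2).support_eq_cons] at this
          rintro rfl
          exact (List.nodup_cons.mp this).1 hz2
        rw [(P.dropUntil w hw).support_eq_cons] at hzs
        exact (List.mem_cons.mp hzs).resolve_left hznw
    have h1 := tree_path_length hT _ hA
    rw [length_append] at h1
    have h2 := tree_path_length hT _ (hP.takeUntil hw)
    have h3 := tree_path_length hT _ ((hP.dropUntil hw).takeUntil hu2)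
    -- dist p u = dist p w + dist w u
    have hcomm : T.dist w u = T.dist u w := T.dist_comm ..
    simp only [Nat.dist]
    omega

/-- Splitting a path at a prescribed position. -/
lemma tree_split_at (hT : T.IsTree) {a b : β} (P : T.Walk a b) (hP : P.IsPath) (k : ℕ)
    (hk : k ≤ P.length) :
    ∃ m ∈ P.support, T.dist a m = k ∧ T.dist m b = P.length - k := by
  induction P generalizing k with
  | nil =>
    simp only [length_nil, Nat.le_zero] at hk
    subst hk
    exact ⟨_, Walk.start_mem_support _, by simp, by simp⟩
  | @cons u w b h P ih =>
    rw [cons_isPath_iff] at hP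
    rcases Nat.eq_zero_or_pos k with rfl | hkpos
    · refine ⟨u, by simp, by simp, ?_⟩
      have h3 : (Walk.cons h P).IsPath := by rw [cons_isPath_iff]; exact hP
      have h4 := tree_path_length hT _ h3
      omega
    · obtain ⟨k', rfl⟩ : ∃ k', k = k' + 1 := ⟨k - 1, by omega⟩
      rw [length_cons] at hk
      obtain ⟨m, hm, hm1, hm2⟩ := ih hP.1 k' (by omega)
      refine ⟨m, by simp [hm], ?_, ?_⟩
      · have htu : (P.takeUntil m hm).IsPath := hP.1.takeUntil hm
        have hcons : (Walk.cons h (P.takeUntil m hm)).IsPath := by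
          rw [cons_isPath_iff]
          exact ⟨htu, fun hmem => hP.2 (P.support_takeUntil_subset hm hmem)⟩
        have h1 := tree_path_length hT _ hcons
        have h2 := tree_path_length hT _ htu
        rw [length_cons] at h1
        omega
      · rw [length_cons]
        omega

/-- distance from a point to a vertex on a path is at most the max to the endpoints. -/
lemma tree_dist_to_support (hT : T.IsTree) {x' y' s' : β} (s : β) (P : T.Walk x' y')
    (hP : P.IsPath) (hs' : s' ∈ P.support) :
    T.dist s s' ≤ max (T.dist s x') (T.dist s y') := by
  obtain ⟨g, hg, hgate⟩ := tree_gate hT P hP s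
  have h1 := hgate s' hs'
  have h2 := hgate x' P.start_mem_support
  have h3 := hgate y' P.end_mem_support
  have h4 := tree_support_dist hT P hP hg hs'
  have h5 := tree_split_dist hT P hP hg
  have h6 := tree_split_dist hT P hP hs'
  have c1 : T.dist x' g = T.dist g x' := T.dist_comm ..
  have c2 : T.dist x' s' = T.dist s' x' := T.dist_comm ..
  simp only [Nat.dist] at h4
  omega

/-- Center of a spanned subtree of diameter at most 4. -/
lemma tree_center (hT : T.IsTree) (X : Set β) (hfin : X.Finite) (hne : X.Nonempty)
    (hdiam : ∀ x ∈ X, ∀ y ∈ X, T.dist x y ≤ 4) :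
    ∃ m ∈ span T X, ∀ s ∈ span T X, T.dist m s ≤ 2 := by
  obtain ⟨⟨p, q⟩, hpq, hmax⟩ :=
    Set.exists_max_image (X ×ˢ X) (fun z => T.dist z.1 z.2) (hfin.prod hfin) (hne.prod hne)
  obtain ⟨hp, hq⟩ := Set.mem_prod.mp hpq
  obtain ⟨Q⟩ := hT.isConnected p q
  set P := Q.bypass with hPdef
  have hPp : P.IsPath := Q.bypass_isPath
  have hlen : P.length = T.dist p q := tree_path_length hT P hPp
  have hD : T.dist p q ≤ 4 := hdiam p hp q hq
  obtain ⟨m, hm, hm1, hm2⟩ := tree_split_at hT P hPp (T.dist p q / 2) (by omega)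
  have hmspan : m ∈ span T X := ⟨p, hp, q, hq, P, hPp, hm⟩
  have claim1 : ∀ x ∈ X, T.dist m x ≤ 2 := by
    intro x hx
    obtain ⟨g, hg, hgate⟩ := tree_gate hT P hPp x
    have h2 := hgate p P.start_mem_support
    have h3 := hgate q P.end_mem_support
    have h4 := hgate m hm
    have h5 := tree_split_dist hT P hPp hg
    have h6 := tree_support_dist hT P hPp hg hm
    have hxp : T.dist x p ≤ T.dist p q := by simpa using hmax (x, p) (Set.mem_prod.mpr ⟨hx, hp⟩)
    have hxq : T.dist x q ≤ T.dist p q := by simpa using hmax (x, q) (Set.mem_prod.mpr ⟨hx, hq⟩)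
    have c1 : T.dist p g = T.dist g p := T.dist_comm ..
    have c2 : T.dist m x = T.dist x m := T.dist_comm ..
    simp only [Nat.dist] at h6
    omega
  refine ⟨m, hmspan, ?_⟩
  rintro s ⟨x, hx, y, hy, W, hW, hs⟩
  have h1 := tree_dist_to_support hT m W hW hs
  have h2 := claim1 x hx
  have h3 := claim1 y hy
  omega

end PartA

section PartB
variable {β : Type*} {T : SimpleGraph β} {c : β} {L : ℕ}

lemma newTree_adj_inl_inl {a b : β} :
    (newTree T c L).Adj (Sum.inl a) (Sum.inl b) ↔ T.Adj a b := by
  simp only [newTree, fromRel_adj, pathRel]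
  constructor
  · rintro ⟨-, h | h⟩
    · exact h
    · exact h.symm
  · intro h
    exact ⟨by simpa using h.ne, Or.inl h⟩

lemma newTree_adj_inl_inr {a : β} {i : Fin L} :
    (newTree T c L).Adj (Sum.inl a) (Sum.inr i) ↔ a = c ∧ (i : ℕ) = 0 := by
  simp only [newTree, fromRel_adj, pathRel]
  constructor
  · rintro ⟨-, h | h⟩
    · exact h
    · exact h.elim
  · rintro ⟨rfl, h⟩
    exact ⟨by simp, Or.inl ⟨rfl, h⟩⟩

lemma newTree_adj_inr_inr {i j : Fin L} :
    (newTree T c L).Adj (Sum.inr i) (Sum.inr j) ↔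
      (j : ℕ) = (i : ℕ) + 1 ∨ (i : ℕ) = (j : ℕ) + 1 := by
  simp only [newTree, fromRel_adj, pathRel]
  constructor
  · rintro ⟨-, h | h⟩
    · exact Or.inl h
    · exact Or.inr h
  · intro h
    refine ⟨?_, h⟩
    rintro heq
    rw [Sum.inr.injEq] at heq
    subst heq
    omega

/-- The embedding of `T` into the new tree. -/
def inlHom : T →g newTree T c L where
  toFun := Sum.inl
  map_rel' h := newTree_adj_inl_inl.mpr h

@[simp] lemma inlHom_apply (a : β) : (inlHom (T := T) (c := c) (L := L)) a = Sum.inl a := rfl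

/-- Projection to the old tree. -/
def projOld (c : β) : β ⊕ Fin L → β := Sum.elim id fun _ => c

/-- Height above the old tree. -/
def htNew : β ⊕ Fin L → ℕ := Sum.elim (fun _ => 0) fun i => (i : ℕ) + 1

/-- Lower-bound potential. -/
noncomputable def dNew (T : SimpleGraph β) (c : β) (x y : β ⊕ Fin L) : ℕ :=
  T.dist (projOld c x) (projOld c y) + Nat.dist (htNew x) (htNew y)

lemma dNew_self (x : β ⊕ Fin L) : dNew T c x x = 0 := by
  simp [dNew, Nat.dist_self]

lemma dNew_comm (x y : β ⊕ Fin L) : dNew T c x y = dNew T c y x := by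
  simp [dNew, T.dist_comm, Nat.dist_comm]

lemma adj_structure {x y : β ⊕ Fin L} (h : (newTree T c L).Adj x y) :
    (projOld c x = projOld c y ∧ Nat.dist (htNew x) (htNew y) = 1) ∨
      (T.Adj (projOld c x) (projOld c y) ∧ htNew x = htNew y) := by
  rcases x with a | i <;> rcases y with b | j
  · exact Or.inr ⟨newTree_adj_inl_inl.mp h, rfl⟩
  · obtain ⟨rfl, h0⟩ := newTree_adj_inl_inr.mp h
    exact Or.inl ⟨rfl, by simp [projOld, htNew, h0, Nat.dist]⟩
  · obtain ⟨rfl, h0⟩ := newTree_adj_inl_inr.mp h.symm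
    exact Or.inl ⟨rfl, by simp [projOld, htNew, h0, Nat.dist]⟩
  · rcases newTree_adj_inr_inr.mp h with h0 | h0 <;>
      exact Or.inl ⟨rfl, by simp [projOld, htNew, Nat.dist]; omega⟩

lemma dNew_le_succ_of_adj (hconn : T.Connected) {y z : β ⊕ Fin L}
    (h : (newTree T c L).Adj y z) (x : β ⊕ Fin L) :
    dNew T c x z ≤ dNew T c x y + 1 := by
  rcases adj_structure h with ⟨h1, h2⟩ | ⟨h1, h2⟩
  · rw [dNew, dNew, ← h1]
    have := Nat.dist.triangle_inequality (htNew x) (htNew y) (htNew z)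
    omega
  · rw [dNew, dNew, ← h2]
    have h3 := hconn.dist_triangle (u := projOld c x) (v := projOld c y) (w := projOld c z)
    have h4 : T.dist (projOld c y) (projOld c z) = 1 := by
      rw [SimpleGraph.dist_eq_one_iff_adj]
      exact h1
    omega

lemma dNew_le_length (hconn : T.Connected) {x y : β ⊕ Fin L}
    (W : (newTree T c L).Walk x y) : dNew T c x y ≤ W.length := by
  induction W with
  | nil => simp [dNew_self]
  | @cons a b d h W ih =>
    have := dNew_le_succ_of_adj hconn h.symm d
    rw [length_cons]
    calc dNew T c a d ≤ dNew T c b d + 1 := by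
          rw [dNew_comm a d, dNew_comm b d]
          exact dNew_le_succ_of_adj (by assumption) h.symm d
    _ ≤ W.length + 1 := by omega

/-- Walk from `inl c` up the new branch. -/
lemma exists_branch_walk : ∀ (k : ℕ) (hk : k < L),
    ∃ W : (newTree T c L).Walk (Sum.inl c) (Sum.inr ⟨k, hk⟩), W.length = k + 1 := by
  intro k
  induction k with
  | zero =>
    intro hk
    exact ⟨Walk.cons (newTree_adj_inl_inr.mpr ⟨rfl, rfl⟩) Walk.nil, by simp⟩
  | succ k ih =>
    intro hk
    obtain ⟨W, hW⟩ := ih (by omega)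
    refine ⟨W.concat (newTree_adj_inr_inr.mpr (Or.inl rfl)), ?_⟩
    rw [length_concat, hW]

lemma newTree_reachable_inl_c (hconn : T.Connected) (x : β ⊕ Fin L) :
    (newTree T c L).Reachable x (Sum.inl c) := by
  rcases x with a | i
  · obtain ⟨W⟩ := hconn a c
    exact ⟨W.map inlHom⟩
  · obtain ⟨W, -⟩ := exists_branch_walk (T := T) (c := c) (i : ℕ) i.isLt
    exact ⟨W.reverse⟩

lemma newTree_connected (hconn : T.Connected) : (newTree T c L).Connected := by
  rw [connected_iff]
  refine ⟨fun x y => (newTree_reachable_inl_c hconn x).trans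
    (newTree_reachable_inl_c hconn y).symm, ⟨Sum.inl hconn.nonempty.some⟩⟩

lemma newTree_dist_inl_inl (hT : T.IsTree) (a b : β) :
    (newTree T c L).dist (Sum.inl a) (Sum.inl b) = T.dist a b := by
  refine le_antisymm ?_ ?_
  · obtain ⟨w, hw⟩ := hT.isConnected.exists_walk_length_eq_dist a b
    calc (newTree T c L).dist (Sum.inl a) (Sum.inl b) ≤ (w.map inlHom).length :=
          SimpleGraph.dist_le _
    _ = T.dist a b := by rw [Walk.length_map, hw]
  · obtain ⟨W, hW⟩ := (newTree_connected hT.isConnected : (newTree T c L).Connected).exists_walk_length_eq_dist (Sum.inl a) (Sum.inl b)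
    have := dNew_le_length hT.isConnected W
    rw [hW] at this
    simpa [dNew, projOld, htNew, Nat.dist_self] using this

lemma newTree_dist_inl_inr (hT : T.IsTree) (a : β) (i : Fin L) :
    (newTree T c L).dist (Sum.inl a) (Sum.inr i) = T.dist a c + (i : ℕ) + 1 := by
  refine le_antisymm ?_ ?_
  · obtain ⟨w, hw⟩ := hT.isConnected.exists_walk_length_eq_dist a c
    obtain ⟨W, hW⟩ := exists_branch_walk (T := T) (c := c) (i : ℕ) i.isLt
    calc (newTree T c L).dist (Sum.inl a) (Sum.inr i)
        ≤ ((w.map inlHom).append W).length := SimpleGraph.dist_le _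
    _ = T.dist a c + (i : ℕ) + 1 := by
        have hla := Walk.length_append (w.map inlHom) W
        rw [hla, Walk.length_map, hw]
        exact (congrArg (T.dist a c + ·) hW).trans (by omega)
  · obtain ⟨W, hW⟩ := (newTree_connected hT.isConnected : (newTree T c L).Connected).exists_walk_length_eq_dist (Sum.inl a) (Sum.inr i)
    have := dNew_le_length hT.isConnected W
    rw [hW] at this
    have hd : dNew T c (Sum.inl a) (Sum.inr i) = T.dist a c + ((i : ℕ) + 1) := by
      simp [dNew, projOld, htNew, Nat.dist]
    omega

/-- neighbours of a branch vertex. -/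
lemma newTree_adj_inr {n : ℕ} {hn : n < L} {t : β ⊕ Fin L}
    (h : (newTree T c L).Adj (Sum.inr ⟨n, hn⟩) t) :
    (t = Sum.inl c ∧ n = 0) ∨
      (∃ hn' : n + 1 < L, t = Sum.inr ⟨n + 1, hn'⟩) ∨
      (0 < n ∧ t = Sum.inr ⟨n - 1, by omega⟩) := by
  rcases t with a | j
  · obtain ⟨rfl, h0⟩ := newTree_adj_inl_inr.mp h.symm
    exact Or.inl ⟨rfl, h0⟩
  · rcases newTree_adj_inr_inr.mp h with h0 | h0
    · have h0' : (j : ℕ) = n + 1 := by simpa using h0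
      refine Or.inr (Or.inl ⟨h0' ▸ j.isLt, ?_⟩)
      apply congrArg
      exact Fin.ext (by simp [h0'])
    · have h0' : n = (j : ℕ) + 1 := by simpa using h0
      refine Or.inr (Or.inr ⟨by omega, ?_⟩)
      apply congrArg
      exact Fin.ext (by simp; omega)

lemma lift_walk : ∀ {x' y' : β ⊕ Fin L} (W : (newTree T c L).Walk x' y')
    (_ : ∀ t ∈ W.support, t.isLeft) {x y : β} (hx : x' = Sum.inl x) (hy : y' = Sum.inl y),
    ∃ w : T.Walk x y, W.copy hx hy = w.map inlHom := by
  intro x' y' W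
  induction W with
  | nil =>
    rintro - x y rfl hy
    obtain rfl : x = y := Sum.inl_injective hy
    exact ⟨Walk.nil, by simp⟩
  | @cons u m v hadj W ih =>
    rintro hall x y rfl rfl
    have hm : m.isLeft := hall m (by simp)
    obtain ⟨b, rfl⟩ := Sum.isLeft_iff.mp hm
    have hb : T.Adj x b := newTree_adj_inl_inl.mp hadj
    obtain ⟨w', hw'⟩ := ih (fun t ht => hall t (by simp [ht])) rfl rfl
    refine ⟨Walk.cons hb w', ?_⟩
    rw [Walk.map_cons, copy_rfl_rfl] at *
    rw [hw']
    rfl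

lemma newTree_isAcyclic (hT : T.IsTree) : (newTree T c L).IsAcyclic := by
  classical
  intro z W hW
  -- no branch vertex occurs on a cycle
  have hnoinr : ∀ (n : ℕ) (hn : n < L), Sum.inr ⟨n, hn⟩ ∉ W.support := by
    by_contra hcon
    push_neg at hcon
    obtain ⟨n0, hn0, hmem0⟩ := hcon
    set S : Set ℕ := {n | ∃ hn : n < L, Sum.inr ⟨n, hn⟩ ∈ W.support} with hS
    have hSne : S.Nonempty := ⟨n0, hn0, hmem0⟩
    have hSfin : S.Finite := Set.Finite.subset (Set.finite_Iio L) (by rintro n ⟨hn, -⟩; exact hn)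
    have hmax := hSne.csSup_mem hSfin
    set n := sSup S with hn
    obtain ⟨hnL, hmemW⟩ := hmax
    have hub : ∀ k ∈ S, k ≤ n := fun k hk => le_csSup hSfin.bddAbove hk
    -- rotate the cycle to start at the highest branch vertex
    set x : β ⊕ Fin L := Sum.inr ⟨n, hnL⟩ with hx
    have hWrot := hW.rotate hmemW
    set Wr := W.rotate x hmemW with hWr
    have hsupp : ∀ t, t ∈ Wr.support → t ∈ W.support := by
      intro t ht
      rw [Wr.support_eq_cons] at ht
      rcases List.mem_cons.mp ht with h' | h'
      · rw [h']; exact hmemW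
      · rw [(support_rotate W _ hmemW).mem_iff] at h'
        rw [W.support_eq_cons]
        exact List.mem_cons_of_mem _ h'
    cases hWrcases : Wr with
    | nil => rw [hWrcases] at hWrot; exact Walk.IsCycle.not_of_nil hWrot
    | @cons _ y _ hadj q =>
      rw [hWrcases] at hWrot
      rw [Walk.cons_isCycle_iff] at hWrot
      obtain ⟨hqpath, hqe⟩ := hWrot
      have hynx : y ≠ x := fun h => hadj.ne (by rw [h])
      have hqnnil : ¬ q.Nil := not_nil_of_ne hynx
      have hqrev : ¬ q.reverse.Nil := by
        rw [nil_iff_length_eq, length_reverse]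
        rw [nil_iff_length_eq] at hqnnil
        exact hqnnil
      obtain ⟨z', hadj', q', hq'⟩ := not_nil_iff.mp hqrev
      -- z' is the other neighbour of x on the cycle
      have hz'edge : s(x, z') ∈ q.edges := by
        have : s(x, z') ∈ q.reverse.edges := by rw [hq']; simp
        rwa [edges_reverse, List.mem_reverse] at this
      have hyz : y ≠ z' := by
        rintro rfl
        exact hqe hz'edge
      have hyW : y ∈ W.support := by
        apply hsupp
        rw [hWrcases]
        simp
      have hz'W : z' ∈ W.support := by
        apply hsupp
        rw [hWrcases]
        have : z' ∈ q.support := by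
          have : z' ∈ q.reverse.support := by rw [hq']; simp
          rwa [support_reverse, List.mem_reverse] at this
        simp [this]
      -- neighbour analysis
      have key : ∀ t, (newTree T c L).Adj x t → t ∈ W.support →
          (n = 0 ∧ t = Sum.inl c) ∨ (0 < n ∧ t = Sum.inr ⟨n - 1, by omega⟩) := by
        intro t hadjt htW
        rcases newTree_adj_inr hadjt with ⟨rfl, h0⟩ | ⟨hn', rfl⟩ | ⟨h0, rfl⟩
        · exact Or.inl ⟨h0, rfl⟩
        · exact absurd (hub (n + 1) ⟨hn', htW⟩) (by omega)
        · exact Or.inr ⟨h0, rfl⟩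
      rcases key y hadj hyW with ⟨h1, hy'⟩ | ⟨h1, hy'⟩ <;>
        rcases key z' hadj' hz'W with ⟨h2, hz'⟩ | ⟨h2, hz'⟩
      · exact hyz (hy'.trans hz'.symm)
      · omega
      · omega
      · exact hyz (hy'.trans hz'.symm)
  -- hence the cycle lives in the old tree
  have hall : ∀ t ∈ W.support, t.isLeft := by
    intro t ht
    rcases t with b | i
    · rfl
    · exact absurd ht (by simpa using hnoinr i i.isLt)
  rcases hz : z with b | i
  · subst hz
    obtain ⟨w, hw⟩ := lift_walk W hall rfl rfl
    rw [copy_rfl_rfl] at hw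
    rw [hw] at hW
    have := (Walk.map_isCycle_iff_of_injective
      (fun a b h => Sum.inl_injective h : Function.Injective (inlHom (T := T) (c := c) (L := L)))).mp hW
    exact hT.IsAcyclic _ this
  · subst hz
    exact absurd W.start_mem_support (by simpa using hnoinr i i.isLt)

lemma newTree_isTree (hT : T.IsTree) : (newTree T c L).IsTree :=
  ⟨newTree_connected hT.isConnected, newTree_isAcyclic hT⟩

end PartB

end Helpers

/-- Let `T` be a `4`-Steiner root of `G`, `K` a maximal clique, `v ∈ K`
simplicial (`N_G(v) = K ∖ {v}`), and `c` a central node of `T⟨K⟩` closest to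
`v`. Replacing `v` by a Steiner node and re-attaching `v` to `c` by a path of
length `4 − max_{u ∈ K∖{v}} dist_T(c,u)` with all internal nodes Steiner
yields again a `4`-Steiner root of `G`, and all distances between real
vertices can only increase. -/

theorem stmt19 {α β : Type*} [Fintype α] [DecidableEq α] [Fintype β]
    (G : SimpleGraph α) (hG : G.Connected) (T : SimpleGraph β) (f : α → β)
    (hroot : IsSteinerRoot 4 G T f) (K : Set α) (hK : IsMaxClique G K)
    (v : α) (hv : v ∈ K) (hsimp : G.neighborSet v = K \ {v})
    (c : β) (hc : c ∈ setCenter T (span T (f '' K)))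
    (hclosest : ∀ c' ∈ setCenter T (span T (f '' K)),
      T.dist (f v) c ≤ T.dist (f v) c') :
    IsSteinerRoot 4 G (newTree T c (attachLen T f K v c))
        (newEmb f v (attachLen T f K v c)) ∧
      ∀ u w : α, T.dist (f u) (f w) ≤
        (newTree T c (attachLen T f K v c)).dist
          (newEmb f v (attachLen T f K v c) u)
          (newEmb f v (attachLen T f K v c) w) := by
  classical
  obtain ⟨hinj, hT, hiff⟩ := hroot
  set S := span T (f '' K) with hS
  set M := maxDistToClique T f K v c with hMdef
  set L := attachLen T f K v c with hLdef
  have hLM : L = 4 - M := rfl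
  have himg : ∀ u ∈ K, f u ∈ S := fun u hu =>
    ⟨f u, ⟨u, hu, rfl⟩, f u, ⟨u, hu, rfl⟩, SimpleGraph.Walk.nil, SimpleGraph.Walk.IsPath.nil, by simp⟩
  have hdiam : ∀ x ∈ f '' K, ∀ y ∈ f '' K, T.dist x y ≤ 4 := by
    rintro _ ⟨u, hu, rfl⟩ _ ⟨w, hw, rfl⟩
    rcases eq_or_ne u w with rfl | hne
    · rw [SimpleGraph.dist_self]
      omega
    · exact (hiff u w hne).mp (hK.1 hu hw hne)
  obtain ⟨m, hmS, hm⟩ :=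
    tree_center hT (f '' K) (Set.toFinite _) ⟨f v, v, hv, rfl⟩ hdiam
  have hrad : setRad T S ≤ 2 := by
    have h1 : setRad T S ≤ setEcc T S m := Nat.sInf_le ⟨m, hmS, rfl⟩
    have h2 : setEcc T S m ≤ 2 := by
      apply csSup_le'
      rintro d ⟨u, hu, rfl⟩
      exact hm u hu
    omega
  have heccc : setEcc T S c ≤ 2 := le_trans (le_of_eq hc.2) hrad
  have hbddE : BddAbove {d | ∃ u ∈ S, T.dist c u = d} := by
    refine BddAbove.mono ?_ (Set.finite_range (T.dist c)).bddAbove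
    rintro d ⟨u, -, rfl⟩
    exact ⟨u, rfl⟩
  have hdc : ∀ u ∈ K, T.dist c (f u) ≤ 2 := fun u hu =>
    le_trans (le_csSup hbddE ⟨f u, himg u hu, rfl⟩) heccc
  have hM2 : M ≤ 2 := by
    apply csSup_le'
    rintro d ⟨u, hu, -, rfl⟩
    exact hdc u hu
  have hbddM : BddAbove {d | ∃ u ∈ K, u ≠ v ∧ T.dist c (f u) = d} := by
    refine BddAbove.mono ?_ (Set.finite_range (T.dist c)).bddAbove
    rintro d ⟨u, -, -, rfl⟩
    exact ⟨f u, rfl⟩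
  have hMb : ∀ w ∈ K, w ≠ v → T.dist c (f w) ≤ M := fun w hw hwv =>
    le_csSup hbddM ⟨w, hw, hwv, rfl⟩
  have hL0 : 0 < L := by omega
  have hembv : newEmb f v L v = Sum.inr (⟨L - 1, by omega⟩ : Fin L) := by
    rw [newEmb]
    simp [hL0]
  have hembw : ∀ w, w ≠ v → newEmb f v L w = Sum.inl (f w) := by
    intro w hw
    rw [newEmb]
    simp [hw]
  have hdist_vw : ∀ w, w ≠ v →
      (newTree T c L).dist (newEmb f v L v) (newEmb f v L w) = T.dist (f w) c + L := by
    intro w hw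
    rw [hembv, hembw w hw, SimpleGraph.dist_comm, newTree_dist_inl_inr hT]
    show T.dist (f w) c + (L - 1) + 1 = T.dist (f w) c + L
    omega
  have key : ∀ w, w ≠ v → (G.Adj v w ↔ T.dist c (f w) ≤ M) := by
    intro w hw
    constructor
    · intro hadj
      have hmem : w ∈ G.neighborSet v := hadj
      rw [hsimp] at hmem
      exact hMb w hmem.1 hmem.2
    · intro hle
      refine (hiff v w (fun h => hw h.symm)).mpr ?_
      have h1 := hT.isConnected.dist_triangle (u := f v) (v := c) (w := f w)
      have h2 : T.dist (f v) c ≤ 2 := by rw [T.dist_comm]; exact hdc v hv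
      omega
  have hadj_iff : ∀ u w : α, u ≠ w →
      (G.Adj u w ↔ (newTree T c L).dist (newEmb f v L u) (newEmb f v L w) ≤ 4) := by
    have main : ∀ w, w ≠ v →
        (G.Adj v w ↔ (newTree T c L).dist (newEmb f v L v) (newEmb f v L w) ≤ 4) := by
      intro w hw
      rw [hdist_vw w hw, key w hw, T.dist_comm (u := c) (v := f w)]
      omega
    intro u w huw
    by_cases hu : u = v
    · rw [hu]
      exact main w (fun h => huw (hu.trans h.symm))
    · by_cases hw : w = v
      · rw [hw, G.adj_comm, SimpleGraph.dist_comm (G := newTree T c L)]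
        exact main u hu
      · rw [hembw u hu, hembw w hw, newTree_dist_inl_inl hT]
        exact hiff u w huw
  have hinj' : Function.Injective (newEmb f v L) := by
    intro u w h
    by_cases hu : u = v
    · by_cases hw : w = v
      · rw [hu, hw]
      · rw [hu, hembv, hembw w hw] at h
        exact absurd h (by simp)
    · by_cases hw : w = v
      · rw [hw, hembv, hembw u hu] at h
        exact absurd h (by simp)
      · rw [hembw u hu, hembw w hw] at h
        exact hinj (Sum.inl_injective h)
  refine ⟨⟨hinj', newTree_isTree hT, hadj_iff⟩, ?_⟩
  have hmono : ∀ w, w ≠ v →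
      T.dist (f v) (f w) ≤ (newTree T c L).dist (newEmb f v L v) (newEmb f v L w) := by
    intro w hw
    rw [hdist_vw w hw]
    have h1 := hT.isConnected.dist_triangle (u := f v) (v := c) (w := f w)
    have h2 : T.dist (f v) c ≤ 2 := by rw [T.dist_comm]; exact hdc v hv
    have h3 : T.dist (f w) c = T.dist c (f w) := T.dist_comm (u := f w) (v := c)
    omega
  intro u w
  by_cases hu : u = v
  · by_cases hw : w = v
    · rw [hu, hw, SimpleGraph.dist_self]
      omega
    · rw [hu]
      exact hmono w hw
  · by_cases hw : w = v
    · rw [hw, T.dist_comm, SimpleGraph.dist_comm (G := newTree T c L)]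
      exact hmono u hu
    · rw [hembw u hu, hembw w hw, newTree_dist_inl_inl hT]
end
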